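/- arXiv:1502.06581 — 13 statements merged into one kernel-verified Lean document; each statement's English description precedes it below -/
import Mathlib

section
/- Let ν > 0 and l > 0, and let u : ℝ → ℝ be twice continuously differentiable on [0, l] and satisfy the stationary Burgers equation ν u''(x) = u(x) u'(x) for all x ∈ [0, l]. If u'(x₀) = 0 for some x₀ ∈ [0, l], then u is constant on [0, l]; consequently every nonconstant stationary solution is strictly monotone on [0, l]. -/
/-- If a stationary solution of Burgers' equation (`ν u'' = u u'` on `[0, l]`) has
`u'(x₀) = 0` at some point `x₀ ∈ [0, l]`, then `u` is constant on `[0, l]`;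
consequently every nonconstant stationary solution is strictly monotone on `[0, l]`. -/
theorem burgers_stationary_const_or_strict_monotone
    (ν l : ℝ) (hν : 0 < ν) (hl : 0 < l)
    (u u' u'' : ℝ → ℝ)
    (hder1 : ∀ x ∈ Set.Icc 0 l, HasDerivAt u (u' x) x)
    (hder2 : ∀ x ∈ Set.Icc 0 l, HasDerivAt u' (u'' x) x)
    (hcont : ContinuousOn u'' (Set.Icc 0 l))
    (hode : ∀ x ∈ Set.Icc 0 l, ν * u'' x = u x * u' x) :
    (∀ x₀ ∈ Set.Icc 0 l, u' x₀ = 0 → ∀ x ∈ Set.Icc 0 l, u x = u x₀) ∧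
    ((¬ ∃ c : ℝ, ∀ x ∈ Set.Icc 0 l, u x = c) →
      StrictMonoOn u (Set.Icc 0 l) ∨ StrictAntiOn u (Set.Icc 0 l)) := by
  have hlle : (0:ℝ) ≤ l := hl.le
  have h0mem : (0:ℝ) ∈ Set.Icc (0:ℝ) l := ⟨le_refl 0, hlle⟩
  have hucont : ContinuousOn u (Set.Icc 0 l) := fun x hx =>
    (hder1 x hx).continuousAt.continuousWithinAt
  have hu'cont : ContinuousOn u' (Set.Icc 0 l) := fun x hx =>
    (hder2 x hx).continuousAt.continuousWithinAt
  -- continuous extension of u to all of ℝ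
  set E : ℝ → ℝ := Set.IccExtend hlle (fun x : Set.Icc 0 l => u x) with hEdef
  have hEcont : Continuous E :=
    Continuous.Icc_extend' (continuousOn_iff_continuous_restrict.1 hucont)
  have hEeq : ∀ x ∈ Set.Icc (0:ℝ) l, E x = u x := fun x hx => by
    simp [hEdef, Set.IccExtend_of_mem hlle _ hx]
  -- antiderivative of E
  set U : ℝ → ℝ := fun x => ∫ t in (0:ℝ)..x, E t with hUdef
  have hU : ∀ x : ℝ, HasDerivAt U (E x) x := fun x =>
    (hEcont.integral_hasStrictDerivAt 0 x).hasDerivAt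
  -- the integrating-factor function w
  set w : ℝ → ℝ := fun x => u' x * Real.exp (-(U x) / ν) with hwdef
  have hw : ∀ x ∈ Set.Icc (0:ℝ) l, HasDerivAt w 0 x := by
    intro x hx
    have hexp : HasDerivAt (fun y => Real.exp (-(U y) / ν))
        (Real.exp (-(U x) / ν) * (-(E x) / ν)) x :=
      (((hU x).neg).div_const ν).exp
    have h := (hder2 x hx).mul hexp
    have hval : u'' x * Real.exp (-(U x) / ν)
        + u' x * (Real.exp (-(U x) / ν) * (-(E x) / ν)) = 0 := by
      have hEx : E x = u x := hEeq x hx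
      have hodex := hode x hx
      rw [hEx]
      field_simp
      have hm : Real.exp (-(U x / ν)) * (ν * u'' x) = Real.exp (-(U x / ν)) * (u x * u' x) := by rw [hodex]
      nlinarith [hodex, Real.exp_pos (-(U x) / ν), hm]
    rwa [hval] at h
  have hwcont : ContinuousOn w (Set.Icc 0 l) := fun x hx =>
    (hw x hx).continuousAt.continuousWithinAt
  have hwconst : ∀ x ∈ Set.Icc (0:ℝ) l, w x = w 0 :=
    constant_of_has_deriv_right_zero hwcont (fun x hx =>
      (hw x (Set.Ico_subset_Icc_self hx)).hasDerivWithinAt)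
  -- Part 1
  have part1 : ∀ x₀ ∈ Set.Icc (0:ℝ) l, u' x₀ = 0 → ∀ x ∈ Set.Icc (0:ℝ) l, u x = u x₀ := by
    intro x₀ hx₀ h0 x hx
    have hw0 : w 0 = 0 := by
      have := hwconst x₀ hx₀
      rw [hwdef] at this ⊢
      simp only [h0, zero_mul] at this
      exact this.symm
    have hu'zero : ∀ y ∈ Set.Icc (0:ℝ) l, u' y = 0 := by
      intro y hy
      have hy0 : w y = 0 := (hwconst y hy).trans hw0
      have hexppos := Real.exp_pos (-(U y) / ν)
      rw [hwdef] at hy0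
      simp only at hy0
      rcases mul_eq_zero.1 hy0 with h | h
      · exact h
      · exact absurd h (ne_of_gt hexppos)
    have huconst : ∀ y ∈ Set.Icc (0:ℝ) l, u y = u 0 :=
      constant_of_has_deriv_right_zero hucont (fun y hy => by
        have := (hder1 y (Set.Ico_subset_Icc_self hy)).hasDerivWithinAt (s := Set.Ici y)
        rwa [hu'zero y (Set.Ico_subset_Icc_self hy)] at this)
    rw [huconst x hx, huconst x₀ hx₀]
  refine ⟨part1, ?_⟩
  -- Part 2
  intro hnc
  have hne : ∀ x ∈ Set.Icc (0:ℝ) l, u' x ≠ 0 := by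
    intro x hx h
    exact hnc ⟨u x, fun y hy => part1 x hx h y hy⟩
  rcases lt_or_gt_of_ne (hne 0 h0mem) with hneg | hpos
  · -- u' 0 < 0 : u' negative everywhere
    have hallneg : ∀ x ∈ Set.Icc (0:ℝ) l, u' x < 0 := by
      intro x hx
      by_contra h
      push_neg at h
      have hgt : 0 < u' x := lt_of_le_of_ne h (Ne.symm (hne x hx))
      have hsub : Set.Icc (0:ℝ) x ⊆ Set.Icc 0 l := Set.Icc_subset_Icc_right hx.2
      have := intermediate_value_Icc hx.1 (hu'cont.mono hsub)
      have h0img : (0:ℝ) ∈ u' '' Set.Icc 0 x := this ⟨hneg.le, hgt.le⟩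
      obtain ⟨y, hy, hy0⟩ := h0img
      exact hne y (hsub hy) hy0
    right
    apply strictAntiOn_of_deriv_neg (convex_Icc 0 l) hucont
    intro x hx
    rw [interior_Icc] at hx
    have hx' : x ∈ Set.Icc (0:ℝ) l := Set.Ioo_subset_Icc_self hx
    rw [(hder1 x hx').deriv]
    exact hallneg x hx'
  · -- u' 0 > 0 : u' positive everywhere
    have hallpos : ∀ x ∈ Set.Icc (0:ℝ) l, 0 < u' x := by
      intro x hx
      by_contra h
      push_neg at h
      have hlt : u' x < 0 := lt_of_le_of_ne h (hne x hx)
      have hsub : Set.Icc (0:ℝ) x ⊆ Set.Icc 0 l := Set.Icc_subset_Icc_right hx.2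
      have := intermediate_value_Icc' hx.1 (hu'cont.mono hsub)
      have h0img : (0:ℝ) ∈ u' '' Set.Icc 0 x := this ⟨hlt.le, hpos.le⟩
      obtain ⟨y, hy, hy0⟩ := h0img
      exact hne y (hsub hy) hy0
    left
    apply strictMonoOn_of_deriv_pos (convex_Icc 0 l) hucont
    intro x hx
    rw [interior_Icc] at hx
    have hx' : x ∈ Set.Icc (0:ℝ) l := Set.Ioo_subset_Icc_self hx
    rw [(hder1 x hx').deriv]
    exact hallpos x hx'
end

section
/- Let ν > 0 and let φ : ℝ × ℝ → ℝ be such that φ(x, t) ≠ 0 for all x, t, φ is twice continuously differentiable, and φ satisfies the heat equation ∂_t φ = ν ∂_xx φ. Then the function u(x, t) := −2ν (∂_x φ(x, t)) / φ(x, t) satisfies the viscous Burgers equation ∂_t u + u ∂_x u = ν ∂_xx u. -/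
/-- The Cole–Hopf transformation: if `φ` is a nonvanishing, twice continuously
differentiable solution of the heat equation `φ_t = ν φ_xx`, then
`u = −2ν φ_x / φ` solves the viscous Burgers equation `u_t + u u_x = ν u_xx`. -/
theorem coleHopf_heat_to_burgers
    (ν : ℝ) (hν : 0 < ν)
    (φ : ℝ × ℝ → ℝ)
    (hφ0 : ∀ x t : ℝ, φ (x, t) ≠ 0)
    (hφ : ContDiff ℝ 2 φ)
    (hheat : ∀ x t : ℝ,
      deriv (fun s => φ (x, s)) t = ν * deriv (fun y => deriv (fun z => φ (z, t)) y) x)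
    (u : ℝ → ℝ → ℝ)
    (hu : ∀ x t : ℝ, u x t = -2 * ν * deriv (fun y => φ (y, t)) x / φ (x, t)) :
    ∀ x t : ℝ,
      deriv (fun s => u x s) t + u x t * deriv (fun y => u y t) x
        = ν * deriv (fun y => deriv (fun z => u z t) y) x := by
  intro x t
  have hdiff : Differentiable ℝ φ := hφ.differentiable (by norm_num)
  have hDc : ContDiff ℝ 1 (fderiv ℝ φ) := hφ.fderiv_right (by norm_num)
  have hDd : Differentiable ℝ (fderiv ℝ φ) := hDc.differentiable (by norm_num)
  have hsymm : ∀ (p : ℝ × ℝ) (v w : ℝ × ℝ),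
      fderiv ℝ (fderiv ℝ φ) p v w = fderiv ℝ (fderiv ℝ φ) p w v := fun p v w =>
    second_derivative_symmetric (fun y => (hdiff y).hasFDerivAt) ((hDd p).hasFDerivAt) v w
  have hlineX : ∀ a b : ℝ, HasDerivAt (fun y : ℝ => (y, b)) ((1:ℝ),(0:ℝ)) a :=
    fun a b => (hasDerivAt_id a).prodMk (hasDerivAt_const a b)
  have hlineT : ∀ a b : ℝ, HasDerivAt (fun s : ℝ => (a, s)) ((0:ℝ),(1:ℝ)) b :=
    fun a b => (hasDerivAt_const b a).prodMk (hasDerivAt_id b)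
  have hφX : ∀ a b : ℝ, HasDerivAt (fun y => φ (y, b)) (fderiv ℝ φ (a,b) (1,0)) a :=
    fun a b => (hdiff (a,b)).hasFDerivAt.comp_hasDerivAt a (hlineX a b)
  have hφT : ∀ a b : ℝ, HasDerivAt (fun s => φ (a, s)) (fderiv ℝ φ (a,b) (0,1)) b :=
    fun a b => (hdiff (a,b)).hasFDerivAt.comp_hasDerivAt b (hlineT a b)
  have hDlin : ∀ (p : ℝ×ℝ) (v : ℝ×ℝ), HasFDerivAt (fun q => fderiv ℝ φ q v)
      ((fderiv ℝ (fderiv ℝ φ) p).flip v) p := by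
    intro p v
    simpa using ((hDd p).hasFDerivAt.clm_apply (hasFDerivAt_const v p))
  have hDX : ∀ (v : ℝ×ℝ) (a b : ℝ), HasDerivAt (fun y => fderiv ℝ φ (y,b) v)
      (fderiv ℝ (fderiv ℝ φ) (a,b) (1,0) v) a := by
    intro v a b
    simpa [Function.comp_def] using (hDlin (a,b) v).comp_hasDerivAt a (hlineX a b)
  have hDT : ∀ (v : ℝ×ℝ) (a b : ℝ), HasDerivAt (fun s => fderiv ℝ φ (a,s) v)
      (fderiv ℝ (fderiv ℝ φ) (a,b) (0,1) v) b := by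
    intro v a b
    simpa [Function.comp_def] using (hDlin (a,b) v).comp_hasDerivAt b (hlineT a b)
  -- heat equation in terms of fderivs
  have heat : ∀ a b : ℝ,
      fderiv ℝ φ (a,b) (0,1) = ν * fderiv ℝ (fderiv ℝ φ) (a,b) (1,0) (1,0) := by
    intro a b
    have h2 : (fun y => deriv (fun z => φ (z,b)) y) = fun y => fderiv ℝ φ (y,b) (1,0) :=
      funext fun y => (hφX y b).deriv
    have h3 := hheat a b
    rw [(hφT a b).deriv, h2, (hDX (1,0) a b).deriv] at h3
    exact h3
  -- third x-derivative exists thanks to the heat equation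
  have hXXX : ∀ a b : ℝ, HasDerivAt (fun y => fderiv ℝ (fderiv ℝ φ) (y,b) (1,0) (1,0))
      (fderiv ℝ (fderiv ℝ φ) (a,b) (1,0) (0,1) / ν) a := by
    intro a b
    have hfun : (fun y => fderiv ℝ (fderiv ℝ φ) (y,b) (1,0) (1,0))
        = fun y => fderiv ℝ φ (y,b) (0,1) / ν := by
      funext y
      rw [heat y b]
      field_simp
    rw [hfun]
    exact (hDX (0,1) a b).div_const ν
  -- derivative of u in t
  have huT : HasDerivAt (fun s => u x s)
      ((-2*ν * fderiv ℝ (fderiv ℝ φ) (x,t) (0,1) (1,0) * φ (x,t)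
        - -2*ν * fderiv ℝ φ (x,t) (1,0) * fderiv ℝ φ (x,t) (0,1)) / φ (x,t)^2) t := by
    have hfun : (fun s => u x s) = fun s => -2*ν * fderiv ℝ φ (x,s) (1,0) / φ (x,s) := by
      funext s; rw [hu x s, (hφX x s).deriv]
    rw [hfun]
    exact (HasDerivAt.const_mul (-2*ν) (hDT (1,0) x t)).div (hφT x t) (hφ0 x t)
  -- derivative of u in x (at every point)
  have huX : ∀ a : ℝ, HasDerivAt (fun y => u y t)
      ((-2*ν * fderiv ℝ (fderiv ℝ φ) (a,t) (1,0) (1,0) * φ (a,t)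
        - -2*ν * fderiv ℝ φ (a,t) (1,0) * fderiv ℝ φ (a,t) (1,0)) / φ (a,t)^2) a := by
    intro a
    have hfun : (fun y => u y t) = fun y => -2*ν * fderiv ℝ φ (y,t) (1,0) / φ (y,t) := by
      funext y; rw [hu y t, (hφX y t).deriv]
    rw [hfun]
    exact (HasDerivAt.const_mul (-2*ν) (hDX (1,0) a t)).div (hφX a t) (hφ0 a t)
  have hfun2 : (fun y => deriv (fun z => u z t) y)
      = fun y => (-2*ν * fderiv ℝ (fderiv ℝ φ) (y,t) (1,0) (1,0) * φ (y,t)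
        - -2*ν * fderiv ℝ φ (y,t) (1,0) * fderiv ℝ φ (y,t) (1,0)) / φ (y,t)^2 :=
    funext fun y => (huX y).deriv
  -- second derivative of u in x
  have hnum : HasDerivAt (fun y => -2*ν * fderiv ℝ (fderiv ℝ φ) (y,t) (1,0) (1,0) * φ (y,t)
        - -2*ν * fderiv ℝ φ (y,t) (1,0) * fderiv ℝ φ (y,t) (1,0))
      ((-2*ν * (fderiv ℝ (fderiv ℝ φ) (x,t) (1,0) (0,1) / ν) * φ (x,t)
          + -2*ν * fderiv ℝ (fderiv ℝ φ) (x,t) (1,0) (1,0) * fderiv ℝ φ (x,t) (1,0))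
        - (-2*ν * fderiv ℝ (fderiv ℝ φ) (x,t) (1,0) (1,0) * fderiv ℝ φ (x,t) (1,0)
          + -2*ν * fderiv ℝ φ (x,t) (1,0) * fderiv ℝ (fderiv ℝ φ) (x,t) (1,0) (1,0))) x :=
    ((HasDerivAt.const_mul (-2*ν) (hXXX x t)).mul (hφX x t)).sub
      ((HasDerivAt.const_mul (-2*ν) (hDX (1,0) x t)).mul (hDX (1,0) x t))
  have hden : HasDerivAt (fun y => φ (y,t)^2)
      (2 * φ (x,t) ^ 1 * fderiv ℝ φ (x,t) (1,0)) x := by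
    simpa using (hφX x t).fun_pow 2
  have huXX := hnum.fun_div hden (pow_ne_zero 2 (hφ0 x t))
  -- put everything together
  rw [huT.deriv, (huX x).deriv, hfun2, huXX.deriv, hu x t, (hφX x t).deriv,
    hsymm (x,t) (0,1) (1,0), heat x t]
  have hA := hφ0 x t
  field_simp
  ring
end

section
/- Let ν > 0, l > 0, and A, B ∈ ℝ with A > B. If u : ℝ → ℝ is twice continuously differentiable on [0, l], satisfies the stationary Burgers equation ν u''(x) = u(x) u'(x) on [0, l], and u(0) = A, u(l) = B, then there exist k₀ > 0 and x₀ ∈ ℝ such that u(x) = −2ν k₀ tanh(k₀ (x − x₀)) for all x ∈ [0, l]. -/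
open Real Set

private lemma my_hasDerivAt_tanh (x : ℝ) :
    HasDerivAt Real.tanh (1 - Real.tanh x ^ 2) x := by
  have hc : Real.cosh x ≠ 0 := (Real.cosh_pos x).ne'
  have h := (Real.hasDerivAt_sinh x).div (Real.hasDerivAt_cosh x) hc
  have heq : (Real.cosh x * Real.cosh x - Real.sinh x * Real.sinh x) / Real.cosh x ^ 2
      = 1 - Real.tanh x ^ 2 := by
    have key := Real.cosh_sq_sub_sinh_sq x
    rw [Real.tanh_eq_sinh_div_cosh]
    field_simp
  have : (Real.sinh / Real.cosh) = Real.tanh :=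
    funext fun y => (Real.tanh_eq_sinh_div_cosh y).symm
  rw [this] at h
  rwa [heq] at h

private lemma my_tanh_sq_lt_one (x : ℝ) : Real.tanh x ^ 2 < 1 := by
  have hc : 0 < Real.cosh x := Real.cosh_pos x
  have key := Real.cosh_sq_sub_sinh_sq x
  rw [Real.tanh_eq_sinh_div_cosh, div_pow]
  rw [div_lt_one (by positivity)]
  nlinarith

private lemma my_exists_tanh_eq {d : ℝ} (h : d ^ 2 < 1) : ∃ t : ℝ, Real.tanh t = d := by
  have h1 : -1 < d := by nlinarith
  have h2 : d < 1 := by nlinarith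
  have hd1 : (0:ℝ) < 1 + d := by linarith
  have hd2 : (0:ℝ) < 1 - d := by linarith
  refine ⟨Real.log ((1 + d) / (1 - d)) / 2, ?_⟩
  set t := Real.log ((1 + d) / (1 - d)) / 2 with ht
  have hR : Real.exp t ^ 2 = (1 + d) / (1 - d) := by
    rw [← Real.exp_nat_mul]
    rw [ht]
    rw [show ((2:ℕ) : ℝ) * (Real.log ((1 + d) / (1 - d)) / 2) = Real.log ((1 + d) / (1 - d)) by
      push_cast; ring]
    exact Real.exp_log (by positivity)
  have hrpos : 0 < Real.exp t := Real.exp_pos t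
  have hkey : Real.exp t ^ 2 * (1 - d) = 1 + d := by
    rw [hR]; field_simp
  rw [Real.tanh_eq_sinh_div_cosh, Real.sinh_eq, Real.cosh_eq, Real.exp_neg]
  have hden : (0:ℝ) < (Real.exp t + (Real.exp t)⁻¹) / 2 := by positivity
  rw [div_eq_iff hden.ne']
  field_simp
  nlinarith [hkey]

set_option maxHeartbeats 1000000 in
/-- When `A > B`, any stationary solution of Burgers' equation on `[0, l]` with
Dirichlet boundary values `u(0) = A`, `u(l) = B` has the form
`u(x) = −2ν k₀ tanh(k₀ (x − x₀))`. -/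
theorem burgers_stationary_dirichlet_decreasing_tanh
    (ν l A B : ℝ) (hν : 0 < ν) (hl : 0 < l) (hAB : A > B)
    (u u' u'' : ℝ → ℝ)
    (hder1 : ∀ x ∈ Set.Icc 0 l, HasDerivAt u (u' x) x)
    (hder2 : ∀ x ∈ Set.Icc 0 l, HasDerivAt u' (u'' x) x)
    (hcont : ContinuousOn u'' (Set.Icc 0 l))
    (hode : ∀ x ∈ Set.Icc 0 l, ν * u'' x = u x * u' x)
    (hbc0 : u 0 = A) (hbcl : u l = B) :
    ∃ k₀ : ℝ, 0 < k₀ ∧ ∃ x₀ : ℝ, ∀ x ∈ Set.Icc 0 l,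
      u x = -2 * ν * k₀ * Real.tanh (k₀ * (x - x₀)) := by
  -- continuity facts
  have hu_cont : ContinuousOn u (Icc 0 l) :=
    fun x hx => (hder1 x hx).continuousAt.continuousWithinAt
  have hu'_cont : ContinuousOn u' (Icc 0 l) :=
    fun x hx => (hder2 x hx).continuousAt.continuousWithinAt
  -- first integral : E x = ν u' x - u x * u x / 2 is constant
  have hFI0 : ∃ C : ℝ, ∀ x ∈ Icc 0 l, ν * u' x = u x * u x / 2 + C := by
    have hEcont : ContinuousOn (fun x => ν * u' x - u x * u x / 2) (Icc 0 l) :=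
      ((continuousOn_const.mul hu'_cont).sub ((hu_cont.mul hu_cont).div_const 2))
    have hEderiv : ∀ x ∈ Ico 0 l,
        HasDerivWithinAt (fun x => ν * u' x - u x * u x / 2) 0 (Ici x) x := by
      intro x hx
      have hx' : x ∈ Icc 0 l := ⟨hx.1, hx.2.le⟩
      have h1 := ((hder2 x hx').const_mul ν).sub (((hder1 x hx').mul (hder1 x hx')).div_const 2)
      have h0 : ν * u'' x - (u' x * u x + u x * u' x) / 2 = 0 := by
        have := hode x hx'; linarith
      rw [h0] at h1
      exact h1.hasDerivWithinAt
    have hEconst := constant_of_has_deriv_right_zero hEcont hEderiv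
    refine ⟨ν * u' 0 - u 0 * u 0 / 2, fun x hx => ?_⟩
    have := hEconst x hx
    linarith
  obtain ⟨C, hFI⟩ := hFI0
  -- mean value theorem
  obtain ⟨c, hc, hslope⟩ := exists_hasDerivAt_eq_slope u u' hl
    hu_cont (fun x hx => hder1 x ⟨hx.1.le, hx.2.le⟩)
  have hcIcc : c ∈ Icc 0 l := ⟨hc.1.le, hc.2.le⟩
  have hu'c_neg : u' c < 0 := by
    rw [hslope, hbc0, hbcl]
    have h1 : B - A < 0 := by linarith
    have : (B - A) / (l - 0) < 0 := div_neg_of_neg_of_pos h1 (by linarith)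
    simpa using this
  have hνu'c : ν * u' c < 0 := mul_neg_of_pos_of_neg hν hu'c_neg
  have hCneg : C < 0 := by
    have h := hFI c hcIcc
    nlinarith [mul_self_nonneg (u c)]
  -- define k₀
  obtain ⟨k₀, hk₀pos, hk₀sq⟩ : ∃ k₀ : ℝ, 0 < k₀ ∧ 2 * ν ^ 2 * k₀ ^ 2 = -C := by
    refine ⟨Real.sqrt (-C / (2 * ν ^ 2)), Real.sqrt_pos.mpr ?_, ?_⟩
    · exact div_pos (by linarith) (by positivity)
    · have h : Real.sqrt (-C / (2 * ν ^ 2)) ^ 2 = -C / (2 * ν ^ 2) :=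
        Real.sq_sqrt (le_of_lt (div_pos (by linarith) (by positivity)))
      rw [h]; field_simp
  -- |u c| < 2 ν k₀
  have hucsq : u c ^ 2 < (2 * ν * k₀) ^ 2 := by
    have h := hFI c hcIcc
    nlinarith [h, hk₀sq, hνu'c]
  have h2νk : 0 < 2 * ν * k₀ := by positivity
  -- choose x₀ via tanh surjectivity
  have hdsq : (-(u c) / (2 * ν * k₀)) ^ 2 < 1 := by
    rw [div_pow, div_lt_one (by positivity)]
    nlinarith [hucsq]
  obtain ⟨t, htanh⟩ := my_exists_tanh_eq hdsq
  refine ⟨k₀, hk₀pos, c - t / k₀, ?_⟩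
  set x₀ : ℝ := c - t / k₀ with hx₀def
  set v : ℝ → ℝ := fun x => -2 * ν * k₀ * Real.tanh (k₀ * (x - x₀)) with hv
  have hvc : v c = u c := by
    have hct : k₀ * (c - x₀) = t := by
      rw [hx₀def]; field_simp; ring
    simp only [hv, hct, htanh]
    field_simp
  -- bound for u
  obtain ⟨M, hM⟩ := isCompact_Icc.exists_bound_of_continuousOn hu_cont
  set R : ℝ := max M (2 * ν * k₀) with hR
  have hRpos : 0 < R := lt_of_lt_of_le h2νk (le_max_right _ _)
  set K : NNReal := Real.toNNReal (R / ν + 1) with hK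
  set f : ℝ → ℝ → ℝ := fun _ y => (y ^ 2 / 2 + C) / ν with hf
  -- Lipschitz bound on the closed ball
  have hLip : ∀ s : ℝ, LipschitzOnWith K (f s) (Metric.closedBall (0:ℝ) R) := by
    intro s
    apply LipschitzOnWith.of_dist_le_mul
    intro y hy z hz
    rw [Metric.mem_closedBall, Real.dist_eq, sub_zero] at hy hz
    have hKval : (K : ℝ) = R / ν + 1 := Real.coe_toNNReal _ (by positivity)
    rw [Real.dist_eq, Real.dist_eq, hKval]
    have heq : (y ^ 2 / 2 + C) / ν - (z ^ 2 / 2 + C) / ν = (y + z) * (y - z) / (2 * ν) := by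
      field_simp; ring
    simp only [hf]
    rw [heq, abs_div, abs_mul, abs_of_pos (by positivity : (0:ℝ) < 2 * ν)]
    have hyz : |y + z| ≤ 2 * R := (abs_add_le y z).trans (by linarith)
    calc |y + z| * |y - z| / (2 * ν) ≤ 2 * R * |y - z| / (2 * ν) := by
          gcongr
      _ = R / ν * |y - z| := by field_simp
      _ ≤ (R / ν + 1) * |y - z| := by
          have := abs_nonneg (y - z); nlinarith
  -- u solves the ODE
  have hf'u : ∀ x ∈ Ioo 0 l, HasDerivAt u (f x (u x)) x := by
    intro x hx
    have hx' : x ∈ Icc 0 l := ⟨hx.1.le, hx.2.le⟩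
    have h := hder1 x hx'
    have heq : u' x = f x (u x) := by
      have hFIx := hFI x hx'
      simp only [hf]
      rw [eq_div_iff hν.ne']
      nlinarith [hFIx]
    rwa [heq] at h
  have hfs : ∀ x ∈ Ioo 0 l, u x ∈ Metric.closedBall (0:ℝ) R := by
    intro x hx
    rw [Metric.mem_closedBall, Real.dist_eq, sub_zero]
    exact (hM x ⟨hx.1.le, hx.2.le⟩).trans (le_max_left _ _)
  -- v solves the ODE
  have hvderiv : ∀ x : ℝ, HasDerivAt v (f x (v x)) x := by
    intro x
    have h1 : HasDerivAt (fun y : ℝ => k₀ * (y - x₀)) k₀ x := by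
      simpa using ((hasDerivAt_id x).sub_const x₀).const_mul k₀
    have h2 := (my_hasDerivAt_tanh (k₀ * (x - x₀))).comp x h1
    have h3 := h2.const_mul (-2 * ν * k₀)
    have heq : -2 * ν * k₀ * ((1 - Real.tanh (k₀ * (x - x₀)) ^ 2) * k₀) = f x (v x) := by
      simp only [hf, hv]
      rw [eq_div_iff hν.ne']
      nlinarith [hk₀sq]
    rwa [heq] at h3
  have hg'v : ∀ x ∈ Ioo 0 l, HasDerivAt v (f x (v x)) x := fun x _ => hvderiv x
  have hv_cont : ContinuousOn v (Icc 0 l) :=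
    fun x _ => (hvderiv x).continuousAt.continuousWithinAt
  have hgs : ∀ x ∈ Ioo 0 l, v x ∈ Metric.closedBall (0:ℝ) R := by
    intro x _
    rw [Metric.mem_closedBall, Real.dist_eq, sub_zero]
    have htb : Real.tanh (k₀ * (x - x₀)) ^ 2 < 1 := my_tanh_sq_lt_one _
    have habs : |Real.tanh (k₀ * (x - x₀))| ≤ 1 := by
      nlinarith [sq_abs (Real.tanh (k₀ * (x - x₀))), abs_nonneg (Real.tanh (k₀ * (x - x₀)))]
    have hb : |v x| ≤ 2 * ν * k₀ := by
      simp only [hv]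
      rw [abs_mul]
      calc |(-2 * ν * k₀)| * |Real.tanh (k₀ * (x - x₀))| ≤ |(-2 * ν * k₀)| * 1 := by
            gcongr
        _ = 2 * ν * k₀ := by rw [abs_of_neg (by nlinarith : -2 * ν * k₀ < 0)]; ring
    exact hb.trans (le_max_right _ _)
  -- uniqueness of solutions
  have huv : EqOn u v (Icc 0 l) :=
    ODE_solution_unique_of_mem_Icc (fun s _ => hLip s) hc hu_cont hf'u hfs
      hv_cont hg'v hgs hvc.symm
  exact fun x hx => huv hx
end

section
/- Let ν > 0, l > 0, and A ∈ ℝ. If u : ℝ → ℝ is twice continuously differentiable on [0, l], satisfies the stationary Burgers equation ν u''(x) = u(x) u'(x) on [0, l], and u(0) = u(l) = A, then u(x) = A for all x ∈ [0, l]. -/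
open Set

/-- When `A = B`, the stationary solution of Burgers' equation on `[0, l]` with
Dirichlet boundary values `u(0) = u(l) = A` is the constant `A`. -/
theorem burgers_stationary_dirichlet_equal_const
    (ν l A : ℝ) (hν : 0 < ν) (hl : 0 < l)
    (u u' u'' : ℝ → ℝ)
    (hder1 : ∀ x ∈ Set.Icc 0 l, HasDerivAt u (u' x) x)
    (hder2 : ∀ x ∈ Set.Icc 0 l, HasDerivAt u' (u'' x) x)
    (hcont : ContinuousOn u'' (Set.Icc 0 l))
    (hode : ∀ x ∈ Set.Icc 0 l, ν * u'' x = u x * u' x)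
    (hbc0 : u 0 = A) (hbcl : u l = A) :
    ∀ x ∈ Set.Icc 0 l, u x = A := by
  have hu_cont : ContinuousOn u (Icc 0 l) := fun x hx =>
    (hder1 x hx).continuousAt.continuousWithinAt
  have hu'_cont : ContinuousOn u' (Icc 0 l) := fun x hx =>
    (hder2 x hx).continuousAt.continuousWithinAt
  -- clamp u to a globally continuous function
  set c : ℝ → ℝ := fun x => u (Set.projIcc 0 l hl.le x) with hc
  have hc_cont : Continuous c := by
    exact (hu_cont.restrict).comp (continuous_projIcc)
  have hc_eq : ∀ x ∈ Icc 0 l, c x = u x := by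
    intro x hx
    simp [hc, Set.projIcc_of_mem hl.le hx]
  -- antiderivative of c
  set g : ℝ → ℝ := fun x => ∫ t in (0:ℝ)..x, c t with hg
  have hg_deriv : ∀ x : ℝ, HasDerivAt g (c x) x := by
    intro x
    exact intervalIntegral.integral_hasDerivAt_right
      (hc_cont.intervalIntegrable 0 x)
      hc_cont.aestronglyMeasurable.stronglyMeasurableAtFilter
      hc_cont.continuousAt
  -- the integrating factor
  set e : ℝ → ℝ := fun x => Real.exp (-(g x) / ν) with he
  have he_deriv : ∀ x : ℝ, HasDerivAt e (e x * (-(c x) / ν)) x := by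
    intro x
    have := (((hg_deriv x).neg).div_const ν).exp
    simpa [he, mul_comm] using this
  set F : ℝ → ℝ := fun x => u' x * e x with hF
  have hF_deriv : ∀ x ∈ Icc 0 l, HasDerivAt F 0 x := by
    intro x hx
    have h := (hder2 x hx).mul (he_deriv x)
    have hval : u'' x * e x + u' x * (e x * (-(c x) / ν)) = 0 := by
      rw [hc_eq x hx]
      have hode' := hode x hx
      have h2 : u'' x = u x * u' x / ν := by
        field_simp
        linarith [hode x hx]
      rw [h2]
      field_simp
      ring
    rw [hval] at h
    exact h
  have he_cont : Continuous e := (Real.continuous_exp.comp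
    ((intervalIntegral.continuous_primitive (fun a b => hc_cont.intervalIntegrable a b) 0).neg.div_const ν))
  have hF_cont : ContinuousOn F (Icc 0 l) := hu'_cont.mul he_cont.continuousOn
  -- F is constant on Icc 0 l
  have hF_const : ∀ x ∈ Icc 0 l, F x = F 0 := by
    apply constant_of_has_deriv_right_zero hF_cont
    intro x hx
    exact ((hF_deriv x (Ico_subset_Icc_self hx)).hasDerivWithinAt)
  have he_pos : ∀ x, 0 < e x := fun x => Real.exp_pos _
  have hu'_eq : ∀ x ∈ Icc 0 l, u' x = u' 0 * e 0 / e x := by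
    intro x hx
    have := hF_const x hx
    simp only [hF] at this
    field_simp at this ⊢
    rw [eq_div_iff (he_pos x).ne']
    linarith [this]
  have h0mem : (0:ℝ) ∈ Icc 0 l := ⟨le_refl _, hl.le⟩
  have hlmem : l ∈ Icc 0 l := ⟨hl.le, le_refl _⟩
  rcases lt_trichotomy (u' 0) 0 with hneg | hzero | hpos
  · -- u' negative everywhere: u strictly antitone, contradiction
    exfalso
    have hderiv_neg : ∀ x ∈ interior (Icc (0:ℝ) l), deriv u x < 0 := by
      intro x hx
      rw [interior_Icc] at hx
      have hx' : x ∈ Icc 0 l := Ioo_subset_Icc_self hx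
      rw [(hder1 x hx').deriv, hu'_eq x hx']
      exact div_neg_of_neg_of_pos (mul_neg_of_neg_of_pos hneg (he_pos 0)) (he_pos x)
    have := strictAntiOn_of_deriv_neg (convex_Icc 0 l) hu_cont hderiv_neg h0mem hlmem hl
    rw [hbc0, hbcl] at this
    exact lt_irrefl _ this
  · -- u' ≡ 0, so u is constant
    intro x hx
    have hu'_zero : ∀ y ∈ Icc 0 l, u' y = 0 := by
      intro y hy
      rw [hu'_eq y hy, hzero]
      simp
    have : ∀ y ∈ Icc 0 l, u y = u 0 := by
      apply constant_of_has_deriv_right_zero hu_cont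
      intro y hy
      have hy' := Ico_subset_Icc_self hy
      have h3 : HasDerivWithinAt u (u' y) (Ici y) y := (hder1 y hy').hasDerivWithinAt
      rwa [hu'_zero y hy'] at h3
    rw [this x hx, hbc0]
  · exfalso
    have hderiv_pos : ∀ x ∈ interior (Icc (0:ℝ) l), 0 < deriv u x := by
      intro x hx
      rw [interior_Icc] at hx
      have hx' : x ∈ Icc 0 l := Ioo_subset_Icc_self hx
      rw [(hder1 x hx').deriv, hu'_eq x hx']
      exact div_pos (mul_pos hpos (he_pos 0)) (he_pos x)
    have := strictMonoOn_of_deriv_pos (convex_Icc 0 l) hu_cont hderiv_pos h0mem hlmem hl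
    rw [hbc0, hbcl] at this
    exact lt_irrefl _ this
end

section
/- Let ν > 0, l > 0, and A, B ∈ ℝ with A < B, and set H = 2ν(B − A) − l·A·B. Then there exists x₀ ∈ ℝ with x₀ ∉ [0, l] such that the function u(x) = −2ν/(x − x₀) satisfies u(0) = A and u(l) = B, if and only if H = 0. -/
/-- For `A < B` and `H = 2ν(B − A) − l·A·B`: there is some `x₀ ∉ [0, l]` such that
the stationary solution `u(x) = −2ν/(x − x₀)` satisfies `u(0) = A` and `u(l) = B`
if and only if `H = 0`. -/
theorem burgers_stationary_rational_form_iff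
    (ν l A B H : ℝ) (hν : 0 < ν) (hl : 0 < l) (hAB : A < B)
    (hH : H = 2 * ν * (B - A) - l * A * B) :
    (∃ x₀ : ℝ, x₀ ∉ Set.Icc 0 l ∧
      (fun x : ℝ => -2 * ν / (x - x₀)) 0 = A ∧
      (fun x : ℝ => -2 * ν / (x - x₀)) l = B) ↔ H = 0 := by
  subst hH
  constructor
  · rintro ⟨x₀, hmem, h0, hl'⟩
    simp only [Set.mem_Icc, not_and, not_le] at hmem
    simp only at h0 hl'
    have hx0 : (0 : ℝ) - x₀ ≠ 0 := by
      intro h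
      have hx : x₀ = 0 := by linarith [sub_eq_zero.mp h]
      have := hmem (by simp [hx])
      simp [hx] at this; linarith
    have hxl : l - x₀ ≠ 0 := by
      intro h
      have hx : x₀ = l := by linarith [sub_eq_zero.mp h]
      have := hmem (by simp [hx, hl.le])
      simp [hx] at this
    rw [div_eq_iff hx0] at h0
    rw [div_eq_iff hxl] at hl'
    linear_combination (-B) * h0 + A * hl'
  · intro hH0
    have hA : A ≠ 0 := by
      intro h
      rw [h] at hH0
      have hB : B = 0 := by nlinarith
      rw [h] at hAB; rw [hB] at hAB; exact lt_irrefl 0 hAB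
    have hden : l * A - 2 * ν ≠ 0 := by
      intro h
      apply hA
      nlinarith
    refine ⟨2 * ν / A, ?_, ?_, ?_⟩
    · rcases lt_or_gt_of_ne hA with hAneg | hApos
      · intro hmem
        rcases hmem with ⟨h1, _⟩
        have : 2 * ν / A < 0 := div_neg_of_pos_of_neg (by linarith) hAneg
        linarith
      · intro hmem
        rcases hmem with ⟨_, h2⟩
        have hB : 0 < B := lt_trans hApos hAB
        have hk : 2 * ν - l * A > 0 := by nlinarith
        have : l < 2 * ν / A := by
          rw [lt_div_iff₀ hApos]; linarith
        linarith
    · simp only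
      field_simp
      ring
    · simp only
      rw [div_eq_iff (by
        intro h
        apply hden
        field_simp at h
        linarith)]
      field_simp
      nlinarith [hH0]
end

section
/- Let ν > 0, l > 0, and A, B ∈ ℝ with A < B, and set H = 2ν(B − A) − l·A·B. If H > 0 and u : ℝ → ℝ is twice continuously differentiable on [0, l], satisfies the stationary Burgers equation ν u''(x) = u(x) u'(x) on [0, l] with u(0) = A and u(l) = B, then there exist k₀ > 0 and x₀ ∈ ℝ such that sin(k₀(x − x₀)) ≠ 0 for all x ∈ [0, l] and u(x) = −2ν k₀ cot(k₀ (x − x₀)) for all x ∈ [0, l]. -/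
open Set

lemma aux_sinh_le_mul_cosh {t : ℝ} (ht : 0 ≤ t) : Real.sinh t ≤ t * Real.cosh t := by
  have hmono : Monotone (fun s : ℝ => s * Real.cosh s - Real.sinh s) := by
    have hd : ∀ s : ℝ, HasDerivAt (fun s : ℝ => s * Real.cosh s - Real.sinh s)
        (s * Real.sinh s) s := by
      intro s
      have h2 := ((hasDerivAt_id s).mul (Real.hasDerivAt_cosh s)).sub (Real.hasDerivAt_sinh s)
      refine h2.congr_deriv ?_; simp
    apply monotone_of_deriv_nonneg
    · exact fun s => ((hd s).differentiableAt)
    · intro s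
      rw [(hd s).deriv]
      rcases le_or_gt 0 s with h | h
      · exact mul_nonneg h (by rwa [← Real.sinh_zero, Real.sinh_le_sinh])
      · have hs : Real.sinh s ≤ 0 := by rw [← Real.sinh_zero, Real.sinh_le_sinh]; exact h.le
        nlinarith
  have := hmono ht
  simpa using this

/-- When `A < B` and `H = 2ν(B − A) − l·A·B > 0`, any stationary solution of Burgers'
equation on `[0, l]` with `u(0) = A`, `u(l) = B` has the form
`u(x) = −2ν k₀ cot(k₀ (x − x₀))`, with `sin(k₀ (x − x₀))` nonvanishing on `[0, l]`. -/
theorem burgers_stationary_dirichlet_Hpos_cot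
    (ν l A B H : ℝ) (hν : 0 < ν) (hl : 0 < l) (hAB : A < B)
    (hH : H = 2 * ν * (B - A) - l * A * B) (hHpos : 0 < H)
    (u u' u'' : ℝ → ℝ)
    (hder1 : ∀ x ∈ Set.Icc 0 l, HasDerivAt u (u' x) x)
    (hder2 : ∀ x ∈ Set.Icc 0 l, HasDerivAt u' (u'' x) x)
    (hcont : ContinuousOn u'' (Set.Icc 0 l))
    (hode : ∀ x ∈ Set.Icc 0 l, ν * u'' x = u x * u' x)
    (hbc0 : u 0 = A) (hbcl : u l = B) :
    ∃ k₀ : ℝ, 0 < k₀ ∧ ∃ x₀ : ℝ,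
      (∀ x ∈ Set.Icc 0 l, Real.sin (k₀ * (x - x₀)) ≠ 0) ∧
      ∀ x ∈ Set.Icc 0 l, u x = -2 * ν * k₀ * Real.cot (k₀ * (x - x₀)) := by
  have hν' : (ν:ℝ) ≠ 0 := hν.ne'
  have hI0 : (0:ℝ) ∈ Set.Icc (0:ℝ) l := ⟨le_refl 0, hl.le⟩
  have hIl : l ∈ Set.Icc (0:ℝ) l := ⟨hl.le, le_refl l⟩
  have hu_cont : ContinuousOn u (Set.Icc 0 l) := fun x hx =>
    (hder1 x hx).continuousAt.continuousWithinAt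
  have hu'_cont : ContinuousOn u' (Set.Icc 0 l) := fun x hx =>
    (hder2 x hx).continuousAt.continuousWithinAt
  -- first integral : ν u' - u²/2 is constant
  set c : ℝ := ν * u' 0 - (u 0)^2 / 2 with hc_def
  have hconst : ∀ x ∈ Set.Icc 0 l, ν * u' x - (u x)^2/2 = c := by
    have key := constant_of_has_deriv_right_zero
      (f := fun y => ν * u' y - (u y)^2/2) (a := 0) (b := l)
      (((continuousOn_const.mul hu'_cont).sub ((hu_cont.pow 2).div_const 2)))
      (fun x hx => by
        have hxI : x ∈ Set.Icc 0 l := ⟨hx.1, hx.2.le⟩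
        have h1 : HasDerivAt (fun y => ν * u' y - (u y)^2/2)
            (ν * u'' x - 2 * u x ^ 1 * u' x / 2) x :=
          ((hder2 x hxI).const_mul ν).sub (((hder1 x hxI).pow 2).div_const 2)
        have h0 : ν * u'' x - 2 * u x ^ 1 * u' x / 2 = 0 := by
          have := hode x hxI; simp only [pow_one]; linarith
        rw [h0] at h1
        exact h1.hasDerivWithinAt)
    intro x hx
    simpa using key x hx
  -- clamped extension of u
  set v : ℝ → ℝ := fun x => u (min (max x 0) l) with hv_def
  have hclamp : ∀ x : ℝ, min (max x 0) l ∈ Set.Icc 0 l := fun x =>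
    ⟨le_min (le_max_right x 0) hl.le, min_le_right _ _⟩
  have hv : Continuous v :=
    hu_cont.comp_continuous ((continuous_id.max continuous_const).min continuous_const) hclamp
  have hv_eq : ∀ x ∈ Set.Icc 0 l, v x = u x := by
    intro x hx
    simp only [hv_def]
    rw [max_eq_left hx.1, min_eq_left hx.2]
  -- Cole-Hopf function φ
  set F : ℝ → ℝ := fun x => ∫ t in (0:ℝ)..x, v t with hF_def
  have hF : ∀ x : ℝ, HasDerivAt F (v x) x := fun x =>
    intervalIntegral.integral_hasDerivAt_right (hv.intervalIntegrable 0 x)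
      (hv.stronglyMeasurableAtFilter _ _) hv.continuousAt
  set φ : ℝ → ℝ := fun x => Real.exp (-(F x) / (2*ν)) with hφ_def
  set ψ : ℝ → ℝ := fun x => -(v x) / (2*ν) * φ x with hψ_def
  have hφpos : ∀ x : ℝ, 0 < φ x := fun x => Real.exp_pos _
  have hφ : ∀ x : ℝ, HasDerivAt φ (ψ x) x := by
    intro x
    have h1 : HasDerivAt (fun y => -(F y) / (2*ν)) (-(v x)/(2*ν)) x := (hF x).neg.div_const _
    have h2 := h1.exp
    convert h2 using 1
    simp only [hψ_def, hφ_def]; ring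
  have hφ0 : φ 0 = 1 := by simp [hφ_def, hF_def]
  have hψ0 : ψ 0 = -A/(2*ν) := by
    simp only [hψ_def]
    rw [hv_eq 0 hI0, hbc0, hφ0, mul_one]
  have hψu : ∀ x ∈ Set.Icc 0 l, ψ x = -(u x)/(2*ν) * φ x := by
    intro x hx; simp only [hψ_def]; rw [hv_eq x hx]
  have hφ_cont : Continuous φ := continuous_iff_continuousAt.mpr (fun x => (hφ x).continuousAt)
  have hψ_cont : Continuous ψ := ((hv.neg).div_const _).mul hφ_cont
  -- second derivative of φ
  have hψder : ∀ x ∈ Set.Ico (0:ℝ) l,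
      HasDerivWithinAt ψ (-(c/(2*ν^2)) * φ x) (Set.Ici x) x := by
    intro x hx
    have hxI : x ∈ Set.Icc 0 l := ⟨hx.1, hx.2.le⟩
    have hmem : Set.Ico x l ∈ nhdsWithin x (Set.Ici x) := by
      have h1 : Set.Iio l ∈ nhds x := Iio_mem_nhds hx.2
      have := inter_mem_nhdsWithin (Set.Ici x) h1
      rwa [Set.Ici_inter_Iio] at this
    have hev : v =ᶠ[nhdsWithin x (Set.Ici x)] u :=
      Filter.eventuallyEq_of_mem hmem (fun y hy => hv_eq y ⟨le_trans hx.1 hy.1, hy.2.le⟩)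
    have hvd : HasDerivWithinAt v (u' x) (Set.Ici x) x :=
      ((hder1 x hxI).hasDerivWithinAt).congr_of_eventuallyEq hev (hv_eq x hxI)
    have h1 : HasDerivWithinAt (fun y => -(v y)/(2*ν)) (-(u' x)/(2*ν)) (Set.Ici x) x :=
      (hvd.neg).div_const _
    have h2 := h1.mul (hφ x).hasDerivWithinAt
    have heq : -(u' x)/(2*ν) * φ x + -(v x)/(2*ν) * ψ x = -(c/(2*ν^2)) * φ x := by
      have hcx := hconst x hxI
      have hux : u' x = ((u x)^2/2 + c)/ν := by field_simp; linear_combination 2*hcx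
      simp only [hψ_def]
      rw [hv_eq x hxI, hux]
      field_simp
      ring
    rw [heq] at h2; exact h2
  clear_value v F φ ψ c
  rcases lt_trichotomy c 0 with hcneg | hc0 | hcpos
  · -- c < 0 : contradiction with H > 0
    exfalso
    have hm2' : 0 < -c/(2*ν^2) := div_pos (by linarith) (by positivity)
    set m : ℝ := Real.sqrt (-c/(2*ν^2)) with hm_def
    have hmpos : 0 < m := Real.sqrt_pos.mpr hm2'
    have hm2 : m^2 = -c/(2*ν^2) := Real.sq_sqrt hm2'.le
    clear_value m
    set a : ℝ := A/(2*ν) with ha_def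
    set b : ℝ := B/(2*ν) with hb_def
    have haA : A = 2*ν*a := by rw [ha_def]; field_simp
    have hbB : B = 2*ν*b := by rw [hb_def]; field_simp
    have hab : a < b := by
      by_contra hba
      push_neg at hba
      linarith [mul_nonneg hν.le (sub_nonneg.mpr hba)]
    clear_value a b
    have hψ0' : ψ 0 = -a := by rw [hψ0, ha_def]; ring
    -- hyperbolic Wronskians
    set V1 : ℝ → ℝ := fun y => ψ y * Real.cosh (m*y) - m * (φ y * Real.sinh (m*y)) with hV1_def
    set V2 : ℝ → ℝ := fun y => ψ y * Real.sinh (m*y) - m * (φ y * Real.cosh (m*y)) with hV2_def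
    have hV1c : ∀ x ∈ Set.Icc 0 l, V1 x = -a := by
      have key := constant_of_has_deriv_right_zero (f := V1) (a := 0) (b := l)
        (((hψ_cont.mul (Real.continuous_cosh.comp (continuous_const.mul continuous_id))).sub
          (continuous_const.mul (hφ_cont.mul
            (Real.continuous_sinh.comp (continuous_const.mul continuous_id))))).continuousOn)
        (fun x hx => by
          have hmx : HasDerivAt (fun y : ℝ => m*y) m x := by
            simpa using (hasDerivAt_id x).const_mul m
          have h := ((hψder x hx).mul hmx.cosh.hasDerivWithinAt).sub
            (((hφ x).hasDerivWithinAt.mul hmx.sinh.hasDerivWithinAt).const_mul m)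
          have h0 : -(c/(2*ν^2)) * φ x * Real.cosh (m*x) + ψ x * (Real.sinh (m*x) * m) -
              m * (ψ x * Real.sinh (m*x) + φ x * (Real.cosh (m*x) * m)) = 0 := by
            linear_combination (-(φ x) * Real.cosh (m*x)) * hm2
          rw [h0] at h; exact h)
      intro x hx
      rw [key x hx]
      simp [hV1_def, hψ0', hφ0]
    have hV2c : ∀ x ∈ Set.Icc 0 l, V2 x = -m := by
      have key := constant_of_has_deriv_right_zero (f := V2) (a := 0) (b := l)
        (((hψ_cont.mul (Real.continuous_sinh.comp (continuous_const.mul continuous_id))).sub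
          (continuous_const.mul (hφ_cont.mul
            (Real.continuous_cosh.comp (continuous_const.mul continuous_id))))).continuousOn)
        (fun x hx => by
          have hmx : HasDerivAt (fun y : ℝ => m*y) m x := by
            simpa using (hasDerivAt_id x).const_mul m
          have h := ((hψder x hx).mul hmx.sinh.hasDerivWithinAt).sub
            (((hφ x).hasDerivWithinAt.mul hmx.cosh.hasDerivWithinAt).const_mul m)
          have h0 : -(c/(2*ν^2)) * φ x * Real.sinh (m*x) + ψ x * (Real.cosh (m*x) * m) -
              m * (ψ x * Real.cosh (m*x) + φ x * (Real.sinh (m*x) * m)) = 0 := by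
            linear_combination (-(φ x) * Real.sinh (m*x)) * hm2
          rw [h0] at h; exact h)
      intro x hx
      rw [key x hx]
      simp [hV2_def, hψ0', hφ0]
    -- evaluate at l
    set S : ℝ := Real.sinh (m*l) with hS_def
    set C : ℝ := Real.cosh (m*l) with hC_def
    have eq1 : ψ l * C - m * (φ l * S) = -a := by
      have := hV1c l hIl; simpa [hV1_def, hS_def, hC_def] using this
    have eq2 : ψ l * S - m * (φ l * C) = -m := by
      have := hV2c l hIl; simpa [hV2_def, hS_def, hC_def] using this
    have h4 : C^2 - S^2 = 1 := by rw [hS_def, hC_def]; exact Real.cosh_sq_sub_sinh_sq _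
    have hS : 0 < S := by rw [hS_def]; exact Real.sinh_pos_iff.mpr (by positivity)
    have hC1 : 1 ≤ C := by rw [hC_def]; exact Real.one_le_cosh _
    have htC : S ≤ (m*l) * C := by
      rw [hS_def, hC_def]; exact aux_sinh_le_mul_cosh (by positivity)
    clear_value S C
    have hφl : m * φ l = m * C - a * S := by
      linear_combination S * eq1 - C * eq2 - (m * φ l) * h4
    have hψl : ψ l = m * S - a * C := by
      linear_combination C * eq1 - S * eq2 - (ψ l) * h4
    have hBl : ψ l = -b * φ l := by
      rw [hψu l hIl, hbcl, hbB]; field_simp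
    have hD : 0 < m * C - a * S := by
      rw [← hφl]; exact mul_pos hmpos (hφpos l)
    have hbD : b * (m*C - a*S) = a*m*C - m^2*S := by
      have h5 : m*(m*S - a*C) = -b*(m*C - a*S) := by
        rw [← hψl, ← hφl, hBl]; ring
      linear_combination h5
    have ha2 : m^2 < a^2 := by
      have h6 : (b-a)*(m*C - a*S) = (a^2 - m^2)*S := by linear_combination hbD
      have h8 : 0 < (a^2 - m^2)*S := h6 ▸ mul_pos (sub_pos.mpr hab) hD
      rcases mul_pos_iff.mp h8 with ⟨h9, _⟩ | ⟨_, h9⟩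
      · linarith
      · linarith
    have hP : 0 < b - a - l*(a*b) := by
      have hHe : H = 4*ν^2*(b - a - l*(a*b)) := by rw [hH, haA, hbB]; ring
      rw [hHe] at hHpos
      rcases mul_pos_iff.mp hHpos with ⟨_, h⟩ | ⟨h, _⟩
      · exact h
      · exact absurd h (not_lt.mpr (by positivity))
    have hN : 0 < (a^2 - m^2)*S - l*a*m*(a*C - m*S) := by
      have h7 : (b - a - l*(a*b)) * (m*C - a*S) = (a^2 - m^2)*S - l*a*m*(a*C - m*S) := by
        linear_combination (1 - l*a) * hbD
      rw [← h7]
      exact mul_pos hP hD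
    rcases le_or_gt (a*(m*l)) m with hcase | hcase
    · linarith [mul_nonneg (sq_nonneg a) (sub_nonneg.mpr htC),
        mul_nonneg (mul_nonneg hmpos.le hS.le) (sub_nonneg.mpr hcase), hN]
    · have hapos : 0 < a := by
        by_contra ha0
        push_neg at ha0
        linarith [mul_nonneg (neg_nonneg.mpr ha0) (mul_pos hmpos hl).le]
      have p1 : 0 < a*m*C - a^2*S := by
        have h10 : a*(m*C - a*S) = a*m*C - a^2*S := by ring
        rw [← h10]; exact mul_pos hapos hD
      linarith [mul_pos (mul_pos (sub_pos.mpr ha2) hS) (sub_pos.mpr hcase),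
        mul_pos (mul_pos (mul_pos hmpos hl) hapos) p1, mul_pos hmpos hN]
  · -- c = 0 : contradiction with H > 0
    exfalso
    have hψc : ∀ x ∈ Set.Icc 0 l, ψ x = -A/(2*ν) := by
      have key := constant_of_has_deriv_right_zero (f := ψ) (a := 0) (b := l)
        hψ_cont.continuousOn
        (fun x hx => by
          have h := hψder x hx
          rw [hc0] at h
          simpa using h)
      intro x hx; rw [key x hx, hψ0]
    have hφl : φ l = 1 + (-A/(2*ν)) * l := by
      have key := constant_of_has_deriv_right_zero (f := fun y => φ y - (-A/(2*ν)) * y)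
        (a := 0) (b := l)
        ((hφ_cont.sub (continuous_const.mul continuous_id)).continuousOn)
        (fun x hx => by
          have h : HasDerivWithinAt (fun y => φ y - -A/(2*ν) * y)
              (ψ x - -A/(2*ν) * 1) (Set.Ici x) x :=
            ((hφ x).sub ((hasDerivAt_id x).const_mul (-A/(2*ν)))).hasDerivWithinAt
          have h0 : ψ x - -A/(2*ν) * 1 = 0 := by
            rw [hψc x ⟨hx.1, hx.2.le⟩]; ring
          rw [h0] at h
          exact h)
      have hkey := key l hIl
      simp only [hφ0, mul_zero, sub_zero] at hkey
      linarith [hkey]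
    have h1 : ψ l = -B/(2*ν) * φ l := by rw [hψu l hIl, hbcl]
    have h2 : ψ l = -A/(2*ν) := hψc l hIl
    have h3 : -A/(2*ν) = -B/(2*ν) * (1 + -A/(2*ν) * l) := by
      rw [hφl] at h1
      rw [h2] at h1
      exact h1
    have h4 : H = 0 := by
      rw [hH]
      field_simp at h3
      have h5 : (2*ν) * (2*ν*(B-A) - l*A*B) = (2*ν) * 0 := by
        rw [mul_zero]; linear_combination (2*ν) * h3
      exact mul_left_cancel₀ (by positivity : (0:ℝ) < 2*ν).ne' h5
    linarith
  · -- c > 0 : the cot solution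
    set k : ℝ := Real.sqrt (c/(2*ν^2)) with hk_def
    have hκpos : 0 < c/(2*ν^2) := by positivity
    have hkpos : 0 < k := Real.sqrt_pos.mpr hκpos
    have hk2 : k^2 = c/(2*ν^2) := Real.sq_sqrt hκpos.le
    set a2 : ℝ := A/(2*ν) with ha2_def
    clear_value a2
    -- Wronskians
    set W1 : ℝ → ℝ := fun y => ψ y * Real.sin (k*y) - k * (φ y * Real.cos (k*y)) with hW1_def
    set W2 : ℝ → ℝ := fun y => ψ y * Real.cos (k*y) + k * (φ y * Real.sin (k*y)) with hW2_def
    have hW1c : ∀ x ∈ Set.Icc 0 l, W1 x = -k := by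
      have key := constant_of_has_deriv_right_zero (f := W1) (a := 0) (b := l)
        (((hψ_cont.mul (Real.continuous_sin.comp (continuous_const.mul continuous_id))).sub
          (continuous_const.mul (hφ_cont.mul
            (Real.continuous_cos.comp (continuous_const.mul continuous_id))))).continuousOn)
        (fun x hx => by
          have hkx : HasDerivAt (fun y : ℝ => k*y) k x := by
            simpa using (hasDerivAt_id x).const_mul k
          have h := ((hψder x hx).mul hkx.sin.hasDerivWithinAt).sub
            (((hφ x).hasDerivWithinAt.mul hkx.cos.hasDerivWithinAt).const_mul k)
          have h0 : -(c/(2*ν^2)) * φ x * Real.sin (k*x) + ψ x * (Real.cos (k*x) * k) -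
              k * (ψ x * Real.cos (k*x) + φ x * (-Real.sin (k*x) * k)) = 0 := by
            linear_combination (φ x * Real.sin (k*x)) * hk2
          rw [h0] at h; exact h)
      intro x hx
      rw [key x hx]
      simp [hW1_def, hψ0, hφ0]
    have hW2c : ∀ x ∈ Set.Icc 0 l, W2 x = -a2 := by
      have key := constant_of_has_deriv_right_zero (f := W2) (a := 0) (b := l)
        (((hψ_cont.mul (Real.continuous_cos.comp (continuous_const.mul continuous_id))).add
          (continuous_const.mul (hφ_cont.mul
            (Real.continuous_sin.comp (continuous_const.mul continuous_id))))).continuousOn)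
        (fun x hx => by
          have hkx : HasDerivAt (fun y : ℝ => k*y) k x := by
            simpa using (hasDerivAt_id x).const_mul k
          have h := ((hψder x hx).mul hkx.cos.hasDerivWithinAt).add
            (((hφ x).hasDerivWithinAt.mul hkx.sin.hasDerivWithinAt).const_mul k)
          have h0 : -(c/(2*ν^2)) * φ x * Real.cos (k*x) + ψ x * (-Real.sin (k*x) * k) +
              k * (ψ x * Real.sin (k*x) + φ x * (Real.cos (k*x) * k)) = 0 := by
            linear_combination (φ x * Real.cos (k*x)) * hk2
          rw [h0] at h; exact h)
      intro x hx
      rw [key x hx]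
      simp [hW2_def, hψ0, hφ0, ha2_def, neg_div]
    -- explicit form of φ and ψ
    have hφx : ∀ x ∈ Set.Icc 0 l, k * φ x = -a2 * Real.sin (k*x) + k * Real.cos (k*x) := by
      intro x hx
      have eq1 := hW1c x hx
      have eq2 := hW2c x hx
      simp only [hW1_def, hW2_def] at eq1 eq2
      have h3 := Real.sin_sq_add_cos_sq (k*x)
      linear_combination Real.sin (k*x) * eq2 - Real.cos (k*x) * eq1 - (k * φ x) * h3
    have hψx : ∀ x ∈ Set.Icc 0 l, ψ x = -a2 * Real.cos (k*x) - k * Real.sin (k*x) := by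
      intro x hx
      have eq1 := hW1c x hx
      have eq2 := hW2c x hx
      simp only [hW1_def, hW2_def] at eq1 eq2
      have h3 := Real.sin_sq_add_cos_sq (k*x)
      linear_combination Real.cos (k*x) * eq2 + Real.sin (k*x) * eq1 - (ψ x) * h3
    -- the phase
    set z : ℂ := ⟨-a2/k, -1⟩ with hz_def
    have hz : z ≠ 0 := by
      intro h
      have := congrArg Complex.im h
      simp [hz_def] at this
    set r : ℝ := ‖z‖ with hr_def
    have hrpos : 0 < r := norm_pos_iff.mpr hz
    set θ : ℝ := Complex.arg z with hθ_def
    have hcosθ : Real.cos θ = (-a2/k)/r := by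
      rw [hθ_def, Complex.cos_arg hz]
    have hsinθ : Real.sin θ = -1/r := by
      rw [hθ_def, Complex.sin_arg]
    refine ⟨k, hkpos, θ/k, ?_, ?_⟩
    · intro x hx
      have harg : k * (x - θ/k) = k*x - θ := by
        field_simp
      rw [harg, Real.sin_sub, hcosθ, hsinθ]
      have hφxx := hφx x hx
      have heq : Real.sin (k*x) * ((-a2/k)/r) - Real.cos (k*x) * (-1/r) = φ x / r := by
        field_simp [hkpos.ne', hrpos.ne']
        linear_combination (-1) * hφxx
      rw [heq]
      exact (div_pos (hφpos x) hrpos).ne'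
    · intro x hx
      have harg : k * (x - θ/k) = k*x - θ := by
        field_simp
      have hφxx := hφx x hx
      have hψxx := hψx x hx
      have hs : Real.sin (k * (x - θ/k)) = φ x / r := by
        rw [harg, Real.sin_sub, hcosθ, hsinθ]
        field_simp [hkpos.ne', hrpos.ne']
        linear_combination (-1) * hφxx
      have hc : Real.cos (k * (x - θ/k)) = ψ x / (k * r) := by
        rw [harg, Real.cos_sub, hcosθ, hsinθ]
        field_simp [hkpos.ne', hrpos.ne']
        linear_combination (-1) * hψxx
      rw [Real.cot_eq_cos_div_sin, hc, hs]
      have hψux := hψu x hx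
      have hφne : φ x ≠ 0 := (hφpos x).ne'
      rw [hψux]
      field_simp [hν', hkpos.ne', hrpos.ne']
end

section
/- Let ν > 0, l > 0, and A, B ∈ ℝ with A < B, and set H = 2ν(B − A) − l·A·B. If H < 0 and u : ℝ → ℝ is twice continuously differentiable on [0, l], satisfies the stationary Burgers equation ν u''(x) = u(x) u'(x) on [0, l] with u(0) = A and u(l) = B, then there exist k₀ > 0 and x₀ ∈ ℝ with x₀ ∉ [0, l] such that u(x) = −2ν k₀ coth(k₀ (x − x₀)) for all x ∈ [0, l]. -/
/-- The hyperbolic cotangent. -/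
noncomputable def Real.coth (x : ℝ) : ℝ := Real.cosh x / Real.sinh x

private lemma const_on_Icc {l : ℝ} (f g : ℝ → ℝ)
    (hf : ∀ x ∈ Set.Icc 0 l, HasDerivAt f (g x) x)
    (hg : ∀ x ∈ Set.Icc 0 l, g x = 0) :
    ∀ x ∈ Set.Icc 0 l, f x = f 0 := by
  intro x hx
  rcases eq_or_lt_of_le hx.1 with h0 | h0
  · rw [← h0]
  · have hsub : Set.Icc 0 x ⊆ Set.Icc 0 l := Set.Icc_subset_Icc le_rfl hx.2
    have hcont : ContinuousOn f (Set.Icc 0 x) := fun y hy =>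
      (hf y (hsub hy)).continuousAt.continuousWithinAt
    have hder : ∀ y ∈ Set.Ioo 0 x, HasDerivAt f (g y) y := fun y hy =>
      hf y (hsub (Set.Ioo_subset_Icc_self hy))
    obtain ⟨m, hm, hmeq⟩ := exists_hasDerivAt_eq_slope f g h0 hcont hder
    have hz : g m = 0 := hg m (hsub (Set.Ioo_subset_Icc_self hm))
    rw [hz] at hmeq
    have h2 := hmeq.symm
    rw [div_eq_zero_iff] at h2
    rcases h2 with h2 | h2
    · linarith
    · exfalso; linarith [sub_ne_zero.2 (ne_of_gt h0), h2]

set_option maxHeartbeats 2000000 in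
/-- When `A < B` and `H = 2ν(B − A) − l·A·B < 0`, any stationary solution of Burgers'
equation on `[0, l]` with `u(0) = A`, `u(l) = B` has the form
`u(x) = −2ν k₀ coth(k₀ (x − x₀))` with `x₀ ∉ [0, l]`. -/
theorem burgers_stationary_dirichlet_Hneg_coth
    (ν l A B H : ℝ) (hν : 0 < ν) (hl : 0 < l) (hAB : A < B)
    (hH : H = 2 * ν * (B - A) - l * A * B) (hHneg : H < 0)
    (u u' u'' : ℝ → ℝ)
    (hder1 : ∀ x ∈ Set.Icc 0 l, HasDerivAt u (u' x) x)
    (hder2 : ∀ x ∈ Set.Icc 0 l, HasDerivAt u' (u'' x) x)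
    (hcont : ContinuousOn u'' (Set.Icc 0 l))
    (hode : ∀ x ∈ Set.Icc 0 l, ν * u'' x = u x * u' x)
    (hbc0 : u 0 = A) (hbcl : u l = B) :
    ∃ k₀ : ℝ, 0 < k₀ ∧ ∃ x₀ : ℝ, x₀ ∉ Set.Icc 0 l ∧
      ∀ x ∈ Set.Icc 0 l, u x = -2 * ν * k₀ * Real.coth (k₀ * (x - x₀)) := by
  have hl0 : (0:ℝ) ≤ l := hl.le
  have hνne : ν ≠ 0 := hν.ne'
  have hcu : ContinuousOn u (Set.Icc 0 l) := fun y hy =>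
    (hder1 y hy).continuousAt.continuousWithinAt
  have hcu' : ContinuousOn u' (Set.Icc 0 l) := fun y hy =>
    (hder2 y hy).continuousAt.continuousWithinAt
  -- Step A: first integral
  set c : ℝ := 2*ν*u' 0 - A^2 with hc
  have hfirst : ∀ x ∈ Set.Icc 0 l, 2*ν*u' x = (u x)^2 + c := by
    have hkey := const_on_Icc (fun x => 2*ν*u' x - (u x)^2)
      (fun x => 2*ν*u'' x - 2*(u x)*(u' x))
      (fun x hx => by
        have h1 := ((hder2 x hx).const_mul (2*ν)).sub ((hder1 x hx).pow 2)
        refine h1.congr_deriv ?_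
        push_cast
        ring)
      (fun x hx => by have := hode x hx; nlinarith [this])
    intro x hx
    have h2 := hkey x hx
    simp only [hbc0] at h2
    rw [hc]
    nlinarith [h2]
  -- Step B: integrating factor, u' > 0
  set pr : ℝ → ℝ := fun x => min (max x 0) l with hpr
  have hprmem : ∀ x, pr x ∈ Set.Icc 0 l := fun x =>
    ⟨le_min (le_max_right x 0) hl0, min_le_right _ _⟩
  set uext : ℝ → ℝ := fun x => u (pr x) with huextdef
  have hprcont : Continuous pr := (continuous_id.max continuous_const).min continuous_const
  have huextcont : Continuous uext := hcu.comp_continuous hprcont hprmem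
  have huext_eq : ∀ x ∈ Set.Icc 0 l, uext x = u x := by
    intro x hx
    simp only [huextdef, hpr, max_eq_left hx.1, min_eq_left hx.2]
  set U : ℝ → ℝ := fun x => ∫ t in (0:ℝ)..x, uext t with hUdef
  have hUder : ∀ x : ℝ, HasDerivAt U (uext x) x := fun x =>
    (huextcont.integral_hasStrictDerivAt 0 x).hasDerivAt
  have hU0 : U 0 = 0 := intervalIntegral.integral_same
  have hhconst : ∀ x ∈ Set.Icc 0 l, u' x * Real.exp (-(U x)/ν) = u' 0 := by
    have key := const_on_Icc (fun x => u' x * Real.exp (-(U x)/ν))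
      (fun x => u'' x * Real.exp (-(U x)/ν) + u' x * (Real.exp (-(U x)/ν) * (-(uext x)/ν)))
      (fun x hx => (hder2 x hx).mul (((hUder x).neg.div_const ν).exp))
      (fun x hx => by
        have hode' := hode x hx
        have hque : uext x = u x := huext_eq x hx
        rw [hque]
        have h3 : u'' x = u x * u' x / ν := by field_simp; linarith
        rw [h3]
        field_simp
        ring)
    intro x hx
    have h2 := key x hx
    simp only [hU0] at h2
    simpa using h2
  have hupos : ∀ x ∈ Set.Icc 0 l, 0 < u' x := by
    obtain ⟨m, hm, hmeq⟩ := exists_hasDerivAt_eq_slope u u' hl hcu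
      (fun y hy => hder1 y (Set.Ioo_subset_Icc_self hy))
    rw [hbc0, hbcl] at hmeq
    have hmpos : 0 < u' m := by
      rw [hmeq]; apply div_pos <;> linarith
    have hm' : m ∈ Set.Icc 0 l := Set.Ioo_subset_Icc_self hm
    have h0pos : 0 < u' 0 := by
      have := hhconst m hm'
      nlinarith [Real.exp_pos (-(U m)/ν)]
    intro x hx
    have h4 := hhconst x hx
    nlinarith [Real.exp_pos (-(U x)/ν)]
  -- basic facts
  have hABpos : 0 < A * B := by nlinarith
  have huIcc : Set.uIcc (0:ℝ) l = Set.Icc 0 l := Set.uIcc_of_le hl0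
  have hABuIcc : Set.uIcc A B = Set.Icc A B := Set.uIcc_of_le hAB.le
  have hint : IntervalIntegrable u' MeasureTheory.volume 0 l :=
    (huIcc ▸ hcu').intervalIntegrable
  have hpos2 : ∀ x ∈ Set.Icc 0 l, 0 < (u x)^2 + c := by
    intro x hx
    rw [← hfirst x hx]
    have := hupos x hx
    nlinarith
  have hsign : 0 < A ∨ B < 0 := by
    by_contra hcon
    push_neg at hcon
    obtain ⟨h1, h2⟩ := hcon
    nlinarith
  have hvne : ∀ v ∈ Set.Icc A B, v ≠ 0 := by
    intro v hv
    rcases hsign with h | h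
    · have : 0 < v := lt_of_lt_of_le h hv.1
      exact this.ne'
    · have : v < 0 := lt_of_le_of_lt hv.2 h
      exact this.ne
  -- Step C: c < 0
  have hcneg : c < 0 := by
    by_contra hcge
    push_neg at hcge
    have hvpos : ∀ v ∈ Set.Icc A B, 0 < v^2 + c := by
      intro v hv
      have h1 : v ≠ 0 := hvne v hv
      have : 0 < v^2 := by positivity
      linarith
    set g : ℝ → ℝ := fun v => (v^2 + c - A*B)/(v^2 + c) with hg
    -- change of variables with u
    have hcov1 : (∫ x in (0:ℝ)..l, u' x • (g ∘ u) x) = ∫ v in A..B, g v := by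
      rw [← hbc0, ← hbcl]
      apply intervalIntegral.integral_comp_smul_deriv' (fun x hx => hder1 x (huIcc ▸ hx))
        (huIcc ▸ hcu')
      apply ContinuousOn.div (by fun_prop) (by fun_prop)
      intro y hy
      obtain ⟨x, hx, rfl⟩ := hy
      exact (hpos2 x (huIcc ▸ hx)).ne'
    have hptw : ∀ x ∈ Set.Icc 0 l, u' x * g (u x) = u' x - A*B/(2*ν) := by
      intro x hx
      have h1 := hfirst x hx
      have h2 := (hpos2 x hx).ne'
      have h3 := (hupos x hx).ne'
      rw [hg]
      field_simp
      nlinarith [h1]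
    have heq1 : (∫ x in (0:ℝ)..l, u' x • (g ∘ u) x)
        = (∫ x in (0:ℝ)..l, u' x) - ∫ x in (0:ℝ)..l, A*B/(2*ν) := by
      rw [← intervalIntegral.integral_sub hint (intervalIntegrable_const)]
      apply intervalIntegral.integral_congr
      intro x hx
      rw [huIcc] at hx
      simpa using hptw x hx
    have hFTC : (∫ x in (0:ℝ)..l, u' x) = B - A := by
      rw [← hbc0, ← hbcl]
      exact intervalIntegral.integral_eq_sub_of_hasDerivAt
        (fun x hx => hder1 x (huIcc ▸ hx)) hint
    have hJval : (∫ v in A..B, g v) = (B - A) - l*(A*B)/(2*ν) := by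
      rw [← hcov1, heq1, hFTC, intervalIntegral.integral_const]
      simp
      ring
    -- split J = J0 + Jc
    set f0 : ℝ → ℝ := fun v => (v^2 - A*B)/(v^2 + c) with hf0
    have hcf0 : ContinuousOn f0 (Set.Icc A B) := by
      apply ContinuousOn.div (by fun_prop) (by fun_prop)
      exact fun v hv => (hvpos v hv).ne'
    have hcfc : ContinuousOn (fun v => c/(v^2+c)) (Set.Icc A B) := by
      apply ContinuousOn.div (by fun_prop) (by fun_prop)
      exact fun v hv => (hvpos v hv).ne'
    have hsplit : (∫ v in A..B, g v)
        = (∫ v in A..B, f0 v) + ∫ v in A..B, c/(v^2+c) := by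
      rw [← intervalIntegral.integral_add ((hABuIcc ▸ hcf0).intervalIntegrable)
        ((hABuIcc ▸ hcfc).intervalIntegrable)]
      apply intervalIntegral.integral_congr
      intro v hv
      rw [hABuIcc] at hv
      have h2 := (hvpos v hv).ne'
      rw [hg, hf0]
      field_simp
      ring
    have hJc : 0 ≤ ∫ v in A..B, c/(v^2+c) := by
      apply intervalIntegral.integral_nonneg hAB.le
      intro v hv
      exact div_nonneg hcge (hvpos v hv).le
    -- J0 ≥ 0 by the v ↦ AB/v substitution
    have hmaps : ∀ w ∈ Set.Icc A B, A*B/w ∈ Set.Icc A B := by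
      intro w hw
      have hwne := hvne w hw
      rcases hsign with h | h
      · have hw0 : 0 < w := lt_of_lt_of_le h hw.1
        constructor
        · rw [le_div_iff₀ hw0]
          nlinarith [mul_le_mul_of_nonneg_left hw.2 h.le]
        · rw [div_le_iff₀ hw0]
          nlinarith [mul_le_mul_of_nonneg_left hw.1 (le_of_lt (lt_trans h hAB))]
      · have hw0 : w < 0 := lt_of_le_of_lt hw.2 h
        constructor
        · rw [le_div_iff_of_neg hw0]
          nlinarith [mul_le_mul_of_nonpos_left hw.2 (le_of_lt (lt_trans hAB h))]
        · rw [div_le_iff_of_neg hw0]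
          nlinarith [mul_le_mul_of_nonpos_left hw.1 h.le]
    have hcov2 : (∫ w in A..B, (-(A*B)/w^2) • (f0 ∘ (fun w => A*B/w)) w)
        = ∫ v in (A*B/A)..(A*B/B), f0 v := by
      apply intervalIntegral.integral_comp_smul_deriv'
      · intro w hw
        rw [hABuIcc] at hw
        have hwne := hvne w hw
        have h5 := (hasDerivAt_const w (A*B)).div (hasDerivAt_id w) hwne
        refine h5.congr_deriv ?_
        simp only [id_eq]; ring
      · apply ContinuousOn.div (by fun_prop) (by fun_prop)
        intro w hw
        rw [hABuIcc] at hw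
        exact pow_ne_zero 2 (hvne w hw)
      · apply hcf0.mono
        intro y hy
        obtain ⟨w, hw, rfl⟩ := hy
        rw [hABuIcc] at hw
        exact hmaps w hw
    have hAne : A ≠ 0 := hvne A ⟨le_rfl, hAB.le⟩
    have hBne : B ≠ 0 := hvne B ⟨hAB.le, le_rfl⟩
    rw [show A*B/A = B by field_simp, show A*B/B = A by field_simp] at hcov2
    replace hcov2 := hcov2.trans (intervalIntegral.integral_symm A B)
    have hJ0 : 0 ≤ ∫ v in A..B, f0 v := by
      have hdouble : (∫ v in A..B, f0 v) + (∫ v in A..B, f0 v)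
          = ∫ v in A..B, (f0 v - (-(A*B)/v^2) • (f0 ∘ (fun w => A*B/w)) v) := by
        rw [intervalIntegral.integral_sub ((hABuIcc ▸ hcf0).intervalIntegrable), hcov2]
        · ring
        · apply ContinuousOn.intervalIntegrable
          rw [hABuIcc]
          apply ContinuousOn.fun_smul
          · apply ContinuousOn.div (by fun_prop) (by fun_prop)
            intro w hw
            exact pow_ne_zero 2 (hvne w hw)
          · exact ContinuousOn.comp hcf0
              (ContinuousOn.div continuousOn_const (by fun_prop) (fun w hw => hvne w hw)) hmaps
      have hnn : 0 ≤ ∫ v in A..B, (f0 v - (-(A*B)/v^2) • (f0 ∘ (fun w => A*B/w)) v) := by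
        apply intervalIntegral.integral_nonneg hAB.le
        intro v hv
        have hv0 := hvne v hv
        have hv2 : (0:ℝ) < v^2 := by positivity
        have hd1 := (hvpos v hv).ne'
        have hd3 : (0:ℝ) < (A*B)^2 + c*v^2 := by nlinarith
        have hd2 : ((A*B/v)^2 + c) ≠ 0 := by
          have : (A*B/v)^2 + c = ((A*B)^2 + c*v^2)/v^2 := by field_simp
          rw [this]
          positivity
        have hkey : f0 v - (-(A*B)/v^2) • (f0 ∘ (fun w => A*B/w)) v
            = c*(v^2-A*B)^2*(v^2+A*B)/((v^2+c)*v^2*((A*B)^2+c*v^2)) := by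
          simp only [hf0, Function.comp, smul_eq_mul]
          field_simp
          ring
        rw [hkey]
        apply div_nonneg
        · have : 0 < v^2 + A*B := by nlinarith
          positivity
        · have := hvpos v hv
          positivity
      linarith
    -- conclude H ≥ 0
    have hJnn : 0 ≤ (∫ v in A..B, g v) := by rw [hsplit]; linarith
    rw [hJval] at hJnn
    have : 0 ≤ H := by
      rw [hH]
      have h6 : 0 ≤ 2*ν*((B - A) - l*(A*B)/(2*ν)) := by positivity
      calc (0:ℝ) ≤ 2*ν*((B - A) - l*(A*B)/(2*ν)) := h6
        _ = 2 * ν * (B - A) - l * A * B := by field_simp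
    linarith
  -- Step D: explicit solution
  set k : ℝ := Real.sqrt (-c) / (2*ν) with hk
  have hkpos : 0 < k := by
    apply div_pos (Real.sqrt_pos.2 (by linarith)) (by linarith)
  set s : ℝ := Real.sqrt (-c) with hs
  have hsk : 2*ν*k = s := by rw [hk]; field_simp
  have hspos : 0 < s := Real.sqrt_pos.2 (by linarith)
  have hs2 : s^2 = -c := Real.sq_sqrt (by linarith)
  have hprod : ∀ x ∈ Set.Icc 0 l, 0 < (u x - s)*(u x + s) := by
    intro x hx
    have := hpos2 x hx
    nlinarith
  have hne2 : ∀ x ∈ Set.Icc 0 l, u x + s ≠ 0 := by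
    intro x hx h
    have := hprod x hx
    rw [h, mul_zero] at this
    exact lt_irrefl 0 this
  have hne1 : ∀ x ∈ Set.Icc 0 l, u x - s ≠ 0 := by
    intro x hx h
    have := hprod x hx
    rw [h, zero_mul] at this
    exact lt_irrefl 0 this
  have hrpos : ∀ x ∈ Set.Icc 0 l, 0 < (u x - s)/(u x + s) := by
    intro x hx
    rcases mul_pos_iff.1 (hprod x hx) with ⟨h1, h2⟩ | ⟨h1, h2⟩
    · exact div_pos h1 h2
    · exact div_pos_of_neg_of_neg h1 h2
  -- w = log r − 2kx is constant
  have hwconst : ∀ x ∈ Set.Icc 0 l,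
      Real.log ((u x - s)/(u x + s)) - 2*k*x
        = Real.log ((u 0 - s)/(u 0 + s)) := by
    have key := const_on_Icc (fun x => Real.log ((u x - s)/(u x + s)) - 2*k*x)
      (fun x => ((u' x*(u x + s) - (u x - s)*(u' x))/(u x + s)^2) / ((u x - s)/(u x + s)) - 2*k*1)
      (fun x hx => by
        have hq := ((hder1 x hx).sub_const s).div ((hder1 x hx).add_const s) (hne2 x hx)
        exact (hq.log (ne_of_gt (hrpos x hx))).sub ((hasDerivAt_id x).const_mul (2*k)))
      (fun x hx => by
        have h1 := hfirst x hx
        have h2 := hne1 x hx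
        have h3 := hne2 x hx
        have h4 := (hupos x hx).ne'
        have h6 := hprod x hx
        have h7 : (u x)^2 - s^2 ≠ 0 := by nlinarith
        have expand : (u' x*(u x + s) - (u x - s)*(u' x))/(u x + s)^2 / ((u x - s)/(u x + s))
            = (2*s*(u' x)) / ((u x)^2 - s^2) := by
          field_simp
          ring
        rw [expand]
        have h5 : (u x)^2 - s^2 = 2*ν*(u' x) := by nlinarith [h1, hs2]
        rw [h5]
        rw [← hsk]
        field_simp
        ring)
    intro x hx
    have h2 := key x hx
    simp only [mul_zero, sub_zero] at h2
    exact h2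
  set x₀ : ℝ := -(Real.log ((u 0 - s)/(u 0 + s)))/(2*k) with hx0
  have h2k : 2*k*x₀ = -Real.log ((u 0 - s)/(u 0 + s)) := by
    rw [hx0]; field_simp
  have hlog : ∀ x ∈ Set.Icc 0 l, Real.log ((u x - s)/(u x + s)) = 2*k*(x - x₀) := by
    intro x hx
    have h2 := hwconst x hx
    have h3 : 2*k*(x - x₀) = 2*k*x - 2*k*x₀ := by ring
    rw [h3, h2k]
    linarith
  have hrexp : ∀ x ∈ Set.Icc 0 l, (u x - s)/(u x + s) = Real.exp (2*k*(x - x₀)) := by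
    intro x hx
    rw [← hlog x hx, Real.exp_log (hrpos x hx)]
  have hx0notin : x₀ ∉ Set.Icc 0 l := by
    intro hmem
    have h1 := hrexp x₀ hmem
    rw [sub_self, mul_zero, Real.exp_zero] at h1
    rw [div_eq_one_iff_eq (hne2 x₀ hmem)] at h1
    linarith
  refine ⟨k, hkpos, x₀, hx0notin, ?_⟩
  intro x hx
  have hxx0 : x ≠ x₀ := fun h => hx0notin (h ▸ hx)
  have hre := hrexp x hx
  set θ : ℝ := k*(x - x₀) with hθ
  have hθne : θ ≠ 0 := mul_ne_zero hkpos.ne' (sub_ne_zero.2 hxx0)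
  have hsinh : Real.sinh θ ≠ 0 := Real.sinh_ne_zero.2 hθne
  have hEne : Real.exp θ ≠ 0 := Real.exp_ne_zero θ
  have hE2 : Real.exp (2*k*(x-x₀)) = Real.exp θ * Real.exp θ := by
    rw [← Real.exp_add]; congr 1; rw [hθ]; ring
  rw [hE2] at hre
  have hmul : u x - s = Real.exp θ * Real.exp θ * (u x + s) :=
    (div_eq_iff (hne2 x hx)).1 hre
  have hden : Real.exp θ - (Real.exp θ)⁻¹ ≠ 0 := by
    intro h
    apply hsinh
    rw [Real.sinh_eq, Real.exp_neg, h]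
    norm_num
  have hE21 : Real.exp θ * Real.exp θ ≠ 1 := by
    rw [← Real.exp_add]
    intro h
    apply hθne
    have h3 := congrArg Real.log h
    rw [Real.log_exp, Real.log_one] at h3
    linarith
  have hne3 : (-1 + Real.exp θ ^ 2) ≠ 0 := by
    intro h
    apply hE21
    nlinarith [h]
  have hE2m1 : Real.exp θ * Real.exp θ - 1 ≠ 0 := sub_ne_zero.2 hE21
  have hcoth : Real.coth θ = (Real.exp θ * Real.exp θ + 1)/(Real.exp θ * Real.exp θ - 1) := by
    unfold Real.coth
    rw [Real.cosh_eq, Real.sinh_eq, Real.exp_neg]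
    rw [div_div_div_comm]
    field_simp
  rw [hcoth]
  rw [mul_div_assoc', eq_div_iff hE2m1]
  linear_combination (-1 : ℝ)*hmul + (Real.exp θ*Real.exp θ+1)*hsk
end

section
/- Let ν > 0, l > 0, and A, B ∈ ℝ be arbitrary. Then there exists exactly one function u : [0, l] → ℝ that is twice continuously differentiable on [0, l], satisfies the stationary Burgers equation ν u''(x) = u(x) u'(x) for all x ∈ [0, l], and satisfies the Dirichlet boundary conditions u(0) = A and u(l) = B. -/
/-- `u` is a (twice continuously differentiable) stationary solution of Burgers'
equation `ν u'' = u u'` on `[0, l]` with Dirichlet boundary values `u(0) = A`,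
`u(l) = B`. -/
def IsStationaryBurgersSolution (ν l A B : ℝ) (u : ℝ → ℝ) : Prop :=
  ∃ u' u'' : ℝ → ℝ,
    (∀ x ∈ Set.Icc 0 l, HasDerivAt u (u' x) x) ∧
    (∀ x ∈ Set.Icc 0 l, HasDerivAt u' (u'' x) x) ∧
    ContinuousOn u'' (Set.Icc 0 l) ∧
    (∀ x ∈ Set.Icc 0 l, ν * u'' x = u x * u' x) ∧
    u 0 = A ∧ u l = B

namespace BurgersAux

open Real Set Filter Topology

/-! ### tanh basics -/

lemma abs_sinh_lt_cosh (y : ℝ) : |Real.sinh y| < Real.cosh y := by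
  have h1 := Real.cosh_pos y
  have h2 := Real.cosh_sq_sub_sinh_sq y
  nlinarith [abs_nonneg (Real.sinh y), sq_abs (Real.sinh y)]

lemma tanh_lt_one (y : ℝ) : Real.tanh y < 1 := by
  rw [Real.tanh_eq_sinh_div_cosh, div_lt_one (Real.cosh_pos y)]
  calc Real.sinh y ≤ |Real.sinh y| := le_abs_self _
    _ < Real.cosh y := abs_sinh_lt_cosh y

lemma neg_one_lt_tanh (y : ℝ) : -1 < Real.tanh y := by
  rw [Real.tanh_eq_sinh_div_cosh, lt_div_iff₀ (Real.cosh_pos y)]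
  have := abs_sinh_lt_cosh y
  have := neg_abs_le (Real.sinh y)
  nlinarith

lemma tanh_nonneg {y : ℝ} (hy : 0 ≤ y) : 0 ≤ Real.tanh y := by
  rw [Real.tanh_eq_sinh_div_cosh]
  exact div_nonneg (Real.sinh_nonneg_iff.mpr hy) (Real.cosh_pos y).le

lemma tanh_mono : Monotone Real.tanh := by
  intro a b hab
  rw [Real.tanh_eq_sinh_div_cosh, Real.tanh_eq_sinh_div_cosh,
    div_le_div_iff₀ (Real.cosh_pos a) (Real.cosh_pos b)]
  have h : Real.sinh (a - b) ≤ 0 := by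
    have : Real.sinh (a - b) ≤ Real.sinh 0 := by
      rcases eq_or_lt_of_le hab with h | h
      · simp [h]
      · exact (Real.sinh_lt_sinh.mpr (by linarith)).le
    simpa using this
  rw [Real.sinh_sub] at h
  linarith

lemma hasDerivAt_tanh (y : ℝ) : HasDerivAt Real.tanh (1 - Real.tanh y ^ 2) y := by
  have h := (Real.hasDerivAt_sinh y).div (Real.hasDerivAt_cosh y) (Real.cosh_pos y).ne'
  have e : (Real.cosh y * Real.cosh y - Real.sinh y * Real.sinh y) / Real.cosh y ^ 2
      = 1 - Real.tanh y ^ 2 := by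
    rw [Real.tanh_eq_sinh_div_cosh]
    have hc := (Real.cosh_pos y).ne'
    have h2 := Real.cosh_sq_sub_sinh_sq y
    field_simp
  rw [← e]
  exact h.congr_of_eventuallyEq
    (Filter.Eventually.of_forall fun x => Real.tanh_eq_sinh_div_cosh x)

lemma one_half_le_tanh_one : (1 : ℝ) / 2 ≤ Real.tanh 1 := by
  rw [Real.tanh_eq_sinh_div_cosh, le_div_iff₀ (Real.cosh_pos 1)]
  rw [Real.sinh_eq, Real.cosh_eq]
  have h := Real.exp_one_gt_d9
  have hy : Real.exp 1 * Real.exp (-1) = 1 := by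
    rw [← Real.exp_add]; norm_num
  nlinarith [Real.exp_pos (-1), Real.exp_pos 1]

/-! ### From a Riccati-type first order equation to the Burgers problem -/

lemma sol_of_riccati {ν l A B k : ℝ} (hν : ν ≠ 0) {u : ℝ → ℝ}
    (hu : ∀ x ∈ Set.Icc 0 l, HasDerivAt u ((u x ^ 2 + k) / (2 * ν)) x)
    (h0 : u 0 = A) (hl : u l = B) : IsStationaryBurgersSolution ν l A B u := by
  have hucont : ContinuousOn u (Set.Icc 0 l) :=
    fun x hx => (hu x hx).continuousAt.continuousWithinAt
  refine ⟨fun x => (u x ^ 2 + k) / (2 * ν),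
    fun x => u x * ((u x ^ 2 + k) / (2 * ν)) / ν, hu, fun x hx => ?_, ?_, fun x hx => ?_, h0, hl⟩
  · have h := (((hu x hx).pow 2).add_const k).div_const (2 * ν)
    refine h.congr_deriv ?_
    symm
    field_simp
    ring
  · exact (hucont.mul (((hucont.pow 2).add continuousOn_const).div_const (2 * ν))).div_const ν
  · field_simp

/-! ### The hyperbolic family -/

noncomputable def hyp (ν c A : ℝ) (x : ℝ) : ℝ :=
  c * (A - c * Real.tanh (c * x / (2 * ν))) / (c - A * Real.tanh (c * x / (2 * ν)))

lemma hyp_hasDerivAt {ν c A : ℝ} (hν : ν ≠ 0) (x : ℝ)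
    (hD : c - A * Real.tanh (c * x / (2 * ν)) ≠ 0) :
    HasDerivAt (hyp ν c A) ((hyp ν c A x ^ 2 + -(c ^ 2)) / (2 * ν)) x := by
  have hθ : HasDerivAt (fun y : ℝ => c * y / (2 * ν)) (c / (2 * ν)) x := by
    simpa using ((hasDerivAt_id x).const_mul c).div_const (2 * ν)
  have ht : HasDerivAt (fun y => Real.tanh (c * y / (2 * ν)))
      ((1 - Real.tanh (c * x / (2 * ν)) ^ 2) * (c / (2 * ν))) x :=
    (hasDerivAt_tanh _).comp x hθ
  set τ := Real.tanh (c * x / (2 * ν)) with hτ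
  have hNum : HasDerivAt (fun y => c * (A - c * Real.tanh (c * y / (2 * ν))))
      (c * -(c * ((1 - τ ^ 2) * (c / (2 * ν))))) x := ((ht.const_mul c).const_sub A).const_mul c
  have hDen : HasDerivAt (fun y => c - A * Real.tanh (c * y / (2 * ν)))
      (-(A * ((1 - τ ^ 2) * (c / (2 * ν))))) x := (ht.const_mul A).const_sub c
  have h := hNum.div hDen hD
  refine h.congr_deriv ?_
  symm
  unfold hyp
  rw [← hτ]
  field_simp
  ring

lemma hyp_zero {ν c A : ℝ} (hc : c ≠ 0) : hyp ν c A 0 = A := by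
  unfold hyp
  simp [Real.tanh_zero, hc]

lemma den_pos {A c : ℝ} (hc : 0 < c) (hAc : |A| ≤ c) {y : ℝ} (hy : 0 ≤ y) :
    0 < c - A * Real.tanh y := by
  have h0 := tanh_nonneg hy
  have h1 := tanh_lt_one y
  have h2 : A * Real.tanh y ≤ c * Real.tanh y :=
    mul_le_mul_of_nonneg_right ((le_abs_self A).trans hAc) h0
  nlinarith

lemma den_pos_neg {A c : ℝ} (hc : 0 < c) (hA : A ≤ 0) {y : ℝ} (hy : 0 ≤ y) :
    0 < c - A * Real.tanh y := by
  have h0 := tanh_nonneg hy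
  nlinarith

/-- The hyperbolic family gives a solution whenever the denominator is positive on `[0,l]`. -/
lemma hyp_sol {ν l c A : ℝ} (hν : 0 < ν) (hc : 0 < c)
    (hD : ∀ x ∈ Set.Icc (0:ℝ) l, 0 < c - A * Real.tanh (c * x / (2 * ν))) :
    IsStationaryBurgersSolution ν l A (hyp ν c A l) (hyp ν c A) := by
  refine sol_of_riccati (k := -(c ^ 2)) hν.ne' (fun x hx => ?_) (hyp_zero hc.ne') rfl
  exact hyp_hasDerivAt hν.ne' x (hD x hx).ne'

lemma continuous_tanh : Continuous Real.tanh := by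
  have he : Real.tanh = fun x => Real.sinh x / Real.cosh x := funext Real.tanh_eq_sinh_div_cosh
  rw [he]
  exact Real.continuous_sinh.div Real.continuous_cosh fun x => (Real.cosh_pos x).ne'

/-- Existence in the strictly decreasing case `B < A`. -/
lemma exists_dec {ν l A B : ℝ} (hν : 0 < ν) (hl : 0 < l) (hBA : B < A) :
    ∃ u, IsStationaryBurgersSolution ν l A B u := by
  set T : ℝ → ℝ := fun c => Real.tanh (c * l / (2 * ν)) with hT
  set F : ℝ → ℝ := fun c => c * (A - c * T c) / (c - A * T c) with hF
  have hTcont : Continuous T := continuous_tanh.comp (by continuity)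
  have hT01 : ∀ c : ℝ, 0 ≤ c → 0 ≤ T c ∧ T c < 1 := by
    intro c hc
    constructor
    · exact tanh_nonneg (div_nonneg (mul_nonneg hc hl.le) (by positivity))
    · exact tanh_lt_one _
  obtain ⟨c₀, hc₀pos, hc₀A, hFc₀⟩ : ∃ c₀, 0 < c₀ ∧ |A| ≤ c₀ ∧ B < F c₀ := by
    rcases eq_or_ne A 0 with h | h
    · have hBneg : B < 0 := by rwa [h] at hBA
      set c₀ := min 1 (-B/2) with hc₀def
      have hpos : 0 < c₀ := lt_min one_pos (by linarith)
      refine ⟨c₀, hpos, by simp [h, hpos.le], ?_⟩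
      have hFc : F c₀ = -(c₀ * T c₀) := by
        rw [hF, h]
        have hc0 := hpos.ne'
        field_simp
        ring_nf
        field_simp
      have h01 := hT01 c₀ hpos.le
      have hc₀B : c₀ ≤ -B/2 := min_le_right _ _
      rw [hFc]
      nlinarith [h01.1, h01.2]
    · refine ⟨|A|, abs_pos.mpr h, le_rfl, ?_⟩
      have h01 := hT01 |A| (abs_nonneg A)
      have hFval : F |A| = A := by
        rcases h.lt_or_gt with hA | hA
        · rw [hF, abs_of_neg hA]
          have h01' := hT01 (-A) (by linarith)
          have hne : -A - A * T (-A) ≠ 0 := by nlinarith [h01'.1]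
          rw [div_eq_iff hne]; ring
        · rw [hF, abs_of_pos hA]
          have h01' := hT01 A hA.le
          have hne : A - A * T A ≠ 0 := by nlinarith [h01'.2]
          rw [div_eq_iff hne]
      rw [hFval]; exact hBA
  set c₂ := max c₀ (max (2 * ν / l) (2 * |A| + 4 * |B| + 1)) with hc₂def
  have hc₂0 : c₀ ≤ c₂ := le_max_left _ _
  have hc₂pos : 0 < c₂ := lt_of_lt_of_le hc₀pos hc₂0
  have hc₂1 : 2 * ν / l ≤ c₂ := le_trans (le_max_left _ _) (le_max_right _ _)
  have hc₂2 : 2 * |A| + 4 * |B| + 1 ≤ c₂ := le_trans (le_max_right _ _) (le_max_right _ _)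
  have hThalf : 1 / 2 ≤ T c₂ := by
    have h1 : (1 : ℝ) ≤ c₂ * l / (2 * ν) := by
      rw [le_div_iff₀ (by positivity)]
      rw [div_le_iff₀ hl] at hc₂1
      linarith
    calc (1 : ℝ) / 2 ≤ Real.tanh 1 := one_half_le_tanh_one
      _ ≤ T c₂ := tanh_mono h1
  have hDpos : ∀ c : ℝ, c₀ ≤ c → 0 < c - A * T c := by
    intro c hc
    exact den_pos (lt_of_lt_of_le hc₀pos hc) (le_trans hc₀A hc)
      (div_nonneg (mul_nonneg (le_trans hc₀pos.le hc) hl.le) (by positivity))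
  have hFc₂ : F c₂ < B := by
    have hD := hDpos c₂ hc₂0
    have h01 := hT01 c₂ hc₂pos.le
    have hDle : c₂ - A * T c₂ ≤ 2 * c₂ := by
      nlinarith [neg_abs_le A, abs_nonneg A, h01.1, h01.2]
    have hNle : A - c₂ * T c₂ ≤ -(2 * |B|) - 1 / 2 := by
      nlinarith [le_abs_self A]
    rw [hF, div_lt_iff₀ hD]
    have h5 : c₂ * (A - c₂ * T c₂) ≤ c₂ * (-(2 * |B|) - 1 / 2) :=
      mul_le_mul_of_nonneg_left hNle hc₂pos.le
    have h6 : -(|B| * (2 * c₂)) ≤ B * (c₂ - A * T c₂) := by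
      nlinarith [mul_le_mul_of_nonneg_right (neg_abs_le B) hD.le,
        mul_le_mul_of_nonneg_left hDle (abs_nonneg B)]
    nlinarith [h5, h6, hc₂pos]
  have hFcont : ContinuousOn F (Set.Icc c₀ c₂) := by
    apply ContinuousOn.div
    · exact (continuous_id.mul (continuous_const.sub (continuous_id.mul hTcont))).continuousOn
    · exact (continuous_id.sub (continuous_const.mul hTcont)).continuousOn
    · exact fun c hc => (hDpos c hc.1).ne'
  have hmem : B ∈ F '' Set.Icc c₀ c₂ :=
    intermediate_value_Icc' hc₂0 hFcont ⟨hFc₂.le, hFc₀.le⟩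
  obtain ⟨c, hcmem, hFc⟩ := hmem
  have hcpos : 0 < c := lt_of_lt_of_le hc₀pos hcmem.1
  have hcA : |A| ≤ c := le_trans hc₀A hcmem.1
  have hsol := hyp_sol (l := l) hν hcpos (fun x hx =>
    den_pos hcpos hcA (div_nonneg (mul_nonneg hcpos.le hx.1) (by positivity)))
  have hfl : hyp ν c A l = B := by rw [← hFc]; simp only [hF, hT, hyp]
  exact ⟨hyp ν c A, hfl ▸ hsol⟩

/-- The rational (degenerate) solution, for `A < 0`. -/
lemma rational_sol {ν l A : ℝ} (hν : 0 < ν) (hl : 0 < l) (hA : A < 0) :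
    IsStationaryBurgersSolution ν l A (2 * ν * A / (2 * ν - A * l))
      (fun x => 2 * ν * A / (2 * ν - A * x)) := by
  refine sol_of_riccati (k := 0) hν.ne' (fun x hx => ?_) ?_ rfl
  · have hD : (0 : ℝ) < 2 * ν - A * x := by nlinarith [hx.1]
    have h := (hasDerivAt_const x (2 * ν * A)).div
      ((hasDerivAt_const x (2 * ν)).sub ((hasDerivAt_id x).const_mul A)) hD.ne'
    refine h.congr_deriv ?_
    symm
    simp only [Pi.sub_apply, id]
    field_simp
    ring
  · rw [mul_zero, sub_zero, mul_comm (2 * ν) A, mul_div_assoc, div_self (by positivity), mul_one]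

lemma not_pole {x : ℝ} (hx : |x| < π / 2) : ∀ k : ℤ, x ≠ (2 * k + 1) * π / 2 := by
  intro k hk
  have h1 : (1 : ℝ) ≤ |2 * (k : ℝ) + 1| := by
    rcases le_or_gt 0 k with h | h
    · have hk0 : (0 : ℝ) ≤ (k : ℝ) := by exact_mod_cast h
      have h2 : (1 : ℝ) ≤ 2 * (k : ℝ) + 1 := by linarith
      exact h2.trans (le_abs_self _)
    · have hk1 : k ≤ -1 := by omega
      have hk1' : (k : ℝ) ≤ -1 := by exact_mod_cast hk1
      have h2 : (1 : ℝ) ≤ -(2 * (k : ℝ) + 1) := by linarith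
      exact h2.trans (neg_le_abs _)
  have habs : |x| = |2 * (k : ℝ) + 1| * (π / 2) := by
    rw [hk, abs_div, abs_mul, abs_of_pos Real.pi_pos]
    rw [abs_two]
    ring
  nlinarith [mul_le_mul_of_nonneg_right h1 (le_of_lt (by positivity : (0 : ℝ) < π / 2))]

/-- The tangent family solution. -/
lemma trig_sol {ν l c A : ℝ} (hν : 0 < ν) (hl : 0 < l) (hc : 0 < c)
    (hup : Real.arctan (A / c) + c * l / (2 * ν) < π / 2) :
    IsStationaryBurgersSolution ν l A
      (c * Real.tan (Real.arctan (A / c) + c * l / (2 * ν)))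
      (fun x => c * Real.tan (Real.arctan (A / c) + c * x / (2 * ν))) := by
  have h2ν : (0 : ℝ) < 2 * ν := by positivity
  refine sol_of_riccati (k := c ^ 2) hν.ne' (fun x hx => ?_) ?_ rfl
  · set θ := Real.arctan (A / c) + c * x / (2 * ν) with hθdef
    have hxl : c * x / (2 * ν) ≤ c * l / (2 * ν) := by
      rw [div_le_div_iff₀ h2ν h2ν]
      nlinarith [mul_le_mul_of_nonneg_left hx.2 hc.le]
    have hθ1 : -(π / 2) < θ := by
      have h1 := Real.neg_pi_div_two_lt_arctan (A / c)
      have h2 : 0 ≤ c * x / (2 * ν) := div_nonneg (mul_nonneg hc.le hx.1) h2ν.le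
      rw [hθdef]; linarith
    have hθ2 : θ < π / 2 := by rw [hθdef]; linarith
    have hcos : Real.cos θ ≠ 0 := (Real.cos_pos_of_mem_Ioo ⟨hθ1, hθ2⟩).ne'
    have hlin : HasDerivAt (fun y : ℝ => Real.arctan (A / c) + c * y / (2 * ν))
        (c / (2 * ν)) x := by
      simpa using (((hasDerivAt_id x).const_mul c).div_const (2 * ν)).const_add
        (Real.arctan (A / c))
    have h := ((Real.hasDerivAt_tan hcos).comp x hlin).const_mul c
    refine h.congr_deriv ?_
    symm
    have hid : (1 : ℝ) / Real.cos θ ^ 2 = 1 + Real.tan θ ^ 2 := by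
      rw [← Real.inv_one_add_tan_sq hcos, one_div, inv_inv]
    show ((c * Real.tan θ) ^ 2 + c ^ 2) / (2 * ν) = c * (1 / Real.cos θ ^ 2 * (c / (2 * ν)))
    rw [hid]
    field_simp
    ring
  · show c * Real.tan (Real.arctan (A / c) + c * 0 / (2 * ν)) = A
    rw [mul_zero, zero_div, add_zero, Real.tan_arctan, mul_comm]
    exact div_mul_cancel₀ A hc.ne'

set_option maxHeartbeats 1000000 in
/-- Existence in the strictly increasing case when `A < 0`. -/
lemma exists_inc_neg {ν l A B : ℝ} (hν : 0 < ν) (hl : 0 < l) (hA : A < 0) (hAB : A < B) :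
    ∃ u, IsStationaryBurgersSolution ν l A B u := by
  have h2ν : (0 : ℝ) < 2 * ν := by positivity
  set B₀ := 2 * ν * A / (2 * ν - A * l) with hB₀def
  have hden0 : 0 < 2 * ν - A * l := by nlinarith
  rcases lt_trichotomy B B₀ with hB | hB | hB
  · -- hyperbolic branch, small `c`
    set T : ℝ → ℝ := fun c => Real.tanh (c * l / (2 * ν)) with hT
    set F : ℝ → ℝ := fun c => c * (A - c * T c) / (c - A * T c) with hF
    have hTcont : Continuous T := continuous_tanh.comp (by continuity)
    have hT01 : ∀ c : ℝ, 0 ≤ c → 0 ≤ T c ∧ T c < 1 := by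
      intro c hc
      exact ⟨tanh_nonneg (div_nonneg (mul_nonneg hc hl.le) h2ν.le), tanh_lt_one _⟩
    have hDpos : ∀ c : ℝ, 0 < c → 0 < c - A * T c := by
      intro c hc
      have := (hT01 c hc.le).1
      nlinarith
    have hgd : HasDerivAt (fun c : ℝ => Real.tanh (c * l / (2 * ν))) (l / (2 * ν)) 0 := by
      have h1 : HasDerivAt (fun c : ℝ => c * l / (2 * ν)) (l / (2 * ν)) 0 := by
        simpa using ((hasDerivAt_id (0 : ℝ)).mul_const l).div_const (2 * ν)
      have h2 := (hasDerivAt_tanh ((0 : ℝ) * l / (2 * ν))).comp 0 h1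
      simpa [Real.tanh_zero, Function.comp_def] using h2
    have hslope : Tendsto (fun c => T c / c) (𝓝[>] (0 : ℝ)) (𝓝 (l / (2 * ν))) := by
      have h2 := (hasDerivAt_iff_tendsto_slope.1 hgd).mono_left
        (nhdsWithin_mono _ fun x (hx : x ∈ Set.Ioi (0 : ℝ)) => ne_of_gt hx)
      refine Filter.Tendsto.congr' ?_ h2
      filter_upwards [self_mem_nhdsWithin] with c hc
      rw [slope_def_field]
      simp [hT, Real.tanh_zero]
    have hFt : Tendsto F (𝓝[>] (0 : ℝ)) (𝓝 B₀) := by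
      have hTc0 : Tendsto (fun c => c * T c) (𝓝[>] (0 : ℝ)) (𝓝 0) := by
        have h3 : Continuous fun c => c * T c := continuous_id.mul hTcont
        have h4 := (h3.tendsto 0).mono_left (nhdsWithin_le_nhds (s := Set.Ioi (0 : ℝ)))
        simpa [hT, Real.tanh_zero] using h4
      have hnum : Tendsto (fun c => A - c * T c) (𝓝[>] (0 : ℝ)) (𝓝 A) := by
        simpa using tendsto_const_nhds.sub hTc0
      have hdenl : Tendsto (fun c => 1 - A * (T c / c)) (𝓝[>] (0 : ℝ))
          (𝓝 (1 - A * (l / (2 * ν)))) := tendsto_const_nhds.sub (hslope.const_mul A)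
      have hlpos : 0 < l / (2 * ν) := by positivity
      have hne : 1 - A * (l / (2 * ν)) ≠ 0 := by nlinarith
      have hdiv := hnum.div hdenl hne
      have hBeq : A / (1 - A * (l / (2 * ν))) = B₀ := by
        rw [hB₀def]
        field_simp
      rw [hBeq] at hdiv
      refine Filter.Tendsto.congr' ?_ hdiv
      filter_upwards [self_mem_nhdsWithin] with c (hc : c ∈ Set.Ioi (0 : ℝ))
      have hc0 : (0 : ℝ) < c := hc
      have hD := hDpos c hc0
      simp only [Pi.div_apply, hF]
      field_simp
    have hev1 : ∀ᶠ c in 𝓝[>] (0 : ℝ), B < F c := hFt.eventually (eventually_gt_nhds hB)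
    have hev2 : ∀ᶠ c in 𝓝[>] (0 : ℝ), c < -A ∧ 0 < c :=
      Filter.eventually_of_mem (Ioo_mem_nhdsGT (by linarith))
        fun c hc => ⟨hc.2, hc.1⟩
    obtain ⟨c', hcc'⟩ := (hev1.and hev2).exists
    have hc'B := hcc'.1
    have hc'A := hcc'.2.1
    have hc'0 := hcc'.2.2
    have h01' := hT01 (-A) (by linarith)
    have hFA : F (-A) = A := by
      have hne2 : -A - A * T (-A) ≠ 0 := by nlinarith [h01'.1]
      rw [hF, div_eq_iff hne2]; ring
    have hFcont : ContinuousOn F (Set.Icc c' (-A)) := by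
      apply ContinuousOn.div
      · exact (continuous_id.mul (continuous_const.sub (continuous_id.mul hTcont))).continuousOn
      · exact (continuous_id.sub (continuous_const.mul hTcont)).continuousOn
      · exact fun c hc => (hDpos c (lt_of_lt_of_le hc'0 hc.1)).ne'
    have hmem : B ∈ F '' Set.Icc c' (-A) :=
      intermediate_value_Icc' (le_of_lt hc'A) hFcont ⟨by rw [hFA]; exact hAB.le, hc'B.le⟩
    obtain ⟨c, hcmem, hFc⟩ := hmem
    have hcpos : 0 < c := lt_of_lt_of_le hc'0 hcmem.1
    have hsol := hyp_sol (l := l) (A := A) hν hcpos (fun x hx => by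
      have ht0 : 0 ≤ Real.tanh (c * x / (2 * ν)) :=
        tanh_nonneg (div_nonneg (mul_nonneg hcpos.le hx.1) h2ν.le)
      nlinarith [mul_nonpos_of_nonpos_of_nonneg hA.le ht0])
    have hfl : hyp ν c A l = B := by rw [← hFc]; simp only [hF, hT, hyp]
    exact ⟨hyp ν c A, hfl ▸ hsol⟩
  · exact ⟨_, by rw [hB, hB₀def]; exact rational_sol hν hl hA⟩
  · -- tangent branch
    set hfun : ℝ → ℝ := fun c => Real.arctan (A / c) + c * l / (2 * ν) with hhdef
    set G : ℝ → ℝ := fun c => c * Real.tan (hfun c) with hGdef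
    have harct : ∀ c : ℝ, 0 < c → Real.arctan (A / c) < 0 := by
      intro c hc
      have h1 : A / c < 0 := div_neg_of_neg_of_pos hA hc
      have h2 := Real.arctan_strictMono h1
      simpa [Real.arctan_zero] using h2
    have hlow : ∀ c : ℝ, 0 < c → -(π / 2) < hfun c := by
      intro c hc
      have h1 := Real.neg_pi_div_two_lt_arctan (A / c)
      have h2 : 0 < c * l / (2 * ν) := by positivity
      simp only [hhdef]
      linarith
    have hhcontAt : ∀ c : ℝ, 0 < c → ContinuousAt hfun c := by
      intro c hc
      apply ContinuousAt.add
      · exact Real.continuous_arctan.continuousAt.comp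
          (continuousAt_const.div continuousAt_id hc.ne')
      · exact ((continuous_id.mul continuous_const).div_const (2 * ν)).continuousAt
    have hGt : Tendsto G (𝓝[>] (0 : ℝ)) (𝓝 B₀) := by
      set E : ℝ → ℝ := fun c => Real.tan (c * l / (2 * ν)) with hEdef
      have hcos0 : Real.cos ((0 : ℝ) * l / (2 * ν)) ≠ 0 := by
        simp [Real.cos_zero]
      have hgd : HasDerivAt E (l / (2 * ν)) 0 := by
        have h1 : HasDerivAt (fun c : ℝ => c * l / (2 * ν)) (l / (2 * ν)) 0 := by
          simpa using ((hasDerivAt_id (0 : ℝ)).mul_const l).div_const (2 * ν)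
        have h2 := (Real.hasDerivAt_tan hcos0).comp 0 h1
        simpa [Real.cos_zero, Function.comp_def] using h2
      have hEslope : Tendsto (fun c => E c / c) (𝓝[>] (0 : ℝ)) (𝓝 (l / (2 * ν))) := by
        have h2 := (hasDerivAt_iff_tendsto_slope.1 hgd).mono_left
          (nhdsWithin_mono _ fun x (hx : x ∈ Set.Ioi (0 : ℝ)) => ne_of_gt hx)
        refine Filter.Tendsto.congr' ?_ h2
        filter_upwards [self_mem_nhdsWithin] with c hc
        rw [slope_def_field]
        simp [hEdef, Real.tan_zero]
      have hfc : ContinuousAt (fun c : ℝ => c * l / (2 * ν)) 0 :=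
        ((continuous_id.mul continuous_const).div_const (2 * ν)).continuousAt
      have hEc : ContinuousAt E 0 := by
        rw [hEdef]
        exact ContinuousAt.comp (x := (0 : ℝ)) (f := fun c : ℝ => c * l / (2 * ν))
          (g := Real.tan) (Real.continuousAt_tan.mpr hcos0) hfc
      have hE0 : Tendsto (fun c => c * E c) (𝓝[>] (0 : ℝ)) (𝓝 0) := by
        have h3 : ContinuousAt (fun c => c * E c) 0 := continuousAt_id.mul hEc
        have h4 := h3.tendsto.mono_left (nhdsWithin_le_nhds (s := Set.Ioi (0 : ℝ)))
        simpa [hEdef, Real.tan_zero] using h4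
      have hnum : Tendsto (fun c => A + c * E c) (𝓝[>] (0 : ℝ)) (𝓝 A) := by
        simpa using tendsto_const_nhds.add hE0
      have hdenl : Tendsto (fun c => 1 - A * (E c / c)) (𝓝[>] (0 : ℝ))
          (𝓝 (1 - A * (l / (2 * ν)))) := tendsto_const_nhds.sub (hEslope.const_mul A)
      have hlpos : 0 < l / (2 * ν) := by positivity
      have hne : 1 - A * (l / (2 * ν)) ≠ 0 := by nlinarith
      have hdiv := hnum.div hdenl hne
      have hBeq : A / (1 - A * (l / (2 * ν))) = B₀ := by
        rw [hB₀def]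
        field_simp
      rw [hBeq] at hdiv
      refine Filter.Tendsto.congr' ?_ hdiv
      filter_upwards [Ioo_mem_nhdsGT (show (0 : ℝ) < π * ν / l by positivity)]
        with c hc
      simp only [Pi.div_apply]
      have hc0 : 0 < c := hc.1
      have hy0 : 0 < c * l / (2 * ν) := by positivity
      have hyr : c * l / (2 * ν) < π / 2 := by
        rw [div_lt_iff₀ h2ν]
        have hpl : π * ν / l * l = π * ν := div_mul_cancel₀ _ hl.ne'
        nlinarith [mul_lt_mul_of_pos_right hc.2 hl, hpl]
      have hEpos : 0 < Real.tan (c * l / (2 * ν)) :=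
        Real.tan_pos_of_pos_of_lt_pi_div_two hy0 hyr
      have hadd : Real.tan (Real.arctan (A / c) + c * l / (2 * ν)) =
          (Real.tan (Real.arctan (A / c)) + Real.tan (c * l / (2 * ν))) /
            (1 - Real.tan (Real.arctan (A / c)) * Real.tan (c * l / (2 * ν))) := by
        apply Real.tan_add
        left
        constructor
        · exact not_pole (abs_lt.mpr
            ⟨Real.neg_pi_div_two_lt_arctan _, Real.arctan_lt_pi_div_two _⟩)
        · exact not_pole (abs_lt.mpr ⟨by linarith, hyr⟩)
      have hAc : A / c < 0 := div_neg_of_neg_of_pos hA hc0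
      have hd1 : 0 < 1 - A / c * Real.tan (c * l / (2 * ν)) := by nlinarith
      simp only [hGdef, hhdef, hEdef]
      rw [hadd, Real.tan_arctan]
      have hd2 : 1 - A * (Real.tan (c * l / (2 * ν)) / c)
          = 1 - A / c * Real.tan (c * l / (2 * ν)) := by ring
      rw [hd2]
      field_simp
    have hev1 : ∀ᶠ c in 𝓝[>] (0 : ℝ), G c < B := hGt.eventually (eventually_lt_nhds hB)
    have hev2 : ∀ᶠ c in 𝓝[>] (0 : ℝ), 0 < c ∧ c < π * ν / l :=
      Filter.eventually_of_mem (Ioo_mem_nhdsGT (by positivity))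
        fun c hc => ⟨hc.1, hc.2⟩
    obtain ⟨c₁, hcc₁⟩ := (hev1.and hev2).exists
    have hc₁G := hcc₁.1
    have hc₁0 := hcc₁.2.1
    have hc₁π := hcc₁.2.2
    have hyr₁ : c₁ * l / (2 * ν) < π / 2 := by
      rw [div_lt_iff₀ h2ν]
      have hpl : π * ν / l * l = π * ν := div_mul_cancel₀ _ hl.ne'
      nlinarith [mul_lt_mul_of_pos_right hc₁π hl, hpl]
    have hhc₁ : hfun c₁ < π / 2 := by
      have h1 := harct c₁ hc₁0
      simp only [hhdef]
      linarith
    set φ := Real.arctan ((|B| + 1) / c₁) with hφdef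
    have hφlt : φ < π / 2 := Real.arctan_lt_pi_div_two _
    have hφgt : -(π / 2) < φ := Real.neg_pi_div_two_lt_arctan _
    have htanφ : Real.tan φ = (|B| + 1) / c₁ := Real.tan_arctan _
    have hhφ : hfun c₁ < φ := by
      by_contra hcon
      push_neg at hcon
      have h1 : Real.tan φ ≤ Real.tan (hfun c₁) := by
        rcases eq_or_lt_of_le hcon with he | hlt
        · rw [he]
        · exact (Real.tan_lt_tan_of_lt_of_lt_pi_div_two hφgt hhc₁ hlt).le
      have h2 : c₁ * ((|B| + 1) / c₁) = |B| + 1 := by field_simp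
      have h3 : |B| + 1 ≤ G c₁ := by
        calc |B| + 1 = c₁ * Real.tan φ := by rw [htanφ, h2]
          _ ≤ c₁ * Real.tan (hfun c₁) := mul_le_mul_of_nonneg_left h1 hc₁0.le
          _ = G c₁ := by simp only [hGdef]
      have := le_abs_self B
      linarith [hc₁G]
    set M := c₁ + 2 * π * ν / l + 1 with hMdef
    have hc₁M : c₁ < M := by
      have : 0 < 2 * π * ν / l := by positivity
      simp only [hMdef]
      linarith
    have hhM : φ ≤ hfun M := by
      have h1 := Real.neg_pi_div_two_lt_arctan (A / M)
      have h2 : π ≤ M * l / (2 * ν) := by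
        rw [le_div_iff₀ h2ν]
        have h3 : 2 * π * ν / l * l = 2 * π * ν := by field_simp
        have h5 : π * (2 * ν) = 2 * π * ν / l * l := by rw [h3]; ring
        rw [h5]
        have h6 : 2 * π * ν / l ≤ M := by rw [hMdef]; linarith [hc₁0]
        exact mul_le_mul_of_nonneg_right h6 hl.le
      have h4 : π / 2 ≤ hfun M := by
        simp only [hhdef]
        linarith [Real.pi_pos]
      exact hφlt.le.trans h4
    set W := {c ∈ Set.Icc c₁ M | φ ≤ hfun c} with hWdef
    have hhcont : ContinuousOn hfun (Set.Icc c₁ M) := fun c hc =>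
      (hhcontAt c (lt_of_lt_of_le hc₁0 hc.1)).continuousWithinAt
    have hWclosed : IsClosed W := by
      have he : W = Set.Icc c₁ M ∩ hfun ⁻¹' (Set.Ici φ) := by
        ext c
        simp [hWdef, Set.mem_sep_iff, Set.mem_preimage, Set.mem_Ici]
      rw [he]
      exact hhcont.preimage_isClosed_of_isClosed isClosed_Icc isClosed_Ici
    have hWne : W.Nonempty := ⟨M, ⟨⟨hc₁M.le, le_rfl⟩, hhM⟩⟩
    have hWbdd : BddBelow W := ⟨c₁, fun c hc => hc.1.1⟩
    set c₂ := sInf W with hc₂def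
    have hc₂W : c₂ ∈ W := hWclosed.csInf_mem hWne hWbdd
    have hc₂1 : c₁ ≤ c₂ := hc₂W.1.1
    have hc₂M : c₂ ≤ M := hc₂W.1.2
    have hc₂φ : φ ≤ hfun c₂ := hc₂W.2
    have hc₁c₂ : c₁ < c₂ := by
      rcases eq_or_lt_of_le hc₂1 with he | h
      · rw [← he] at hc₂φ; linarith
      · exact h
    have hbelow : ∀ c, c₁ ≤ c → c < c₂ → hfun c < φ := by
      intro c h1 h2
      by_contra hcon
      push_neg at hcon
      have hcW : c ∈ W := ⟨⟨h1, le_trans h2.le hc₂M⟩, hcon⟩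
      exact absurd (csInf_le hWbdd hcW) (not_le.mpr h2)
    have hc₂φ' : hfun c₂ ≤ φ := by
      have hcz : ContinuousAt hfun c₂ := hhcontAt c₂ (lt_of_lt_of_le hc₁0 hc₂1)
      have hlt : Tendsto hfun (𝓝[<] c₂) (𝓝 (hfun c₂)) :=
        hcz.tendsto.mono_left nhdsWithin_le_nhds
      have hIoo : Set.Ioo c₁ c₂ ∈ 𝓝[<] c₂ := Ioo_mem_nhdsLT_of_mem ⟨hc₁c₂, le_rfl⟩
      exact le_of_tendsto hlt
        (Filter.eventually_of_mem hIoo fun c hc => (hbelow c hc.1.le hc.2).le)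
    have hhc₂φ : hfun c₂ = φ := le_antisymm hc₂φ' hc₂φ
    have hvalid : ∀ c ∈ Set.Icc c₁ c₂, hfun c ≤ φ := by
      intro c hc
      rcases eq_or_lt_of_le hc.2 with he | hlt
      · rw [he, hhc₂φ]
      · exact (hbelow c hc.1 hlt).le
    have hGcont : ContinuousOn G (Set.Icc c₁ c₂) := by
      intro c hc
      have hc0 : 0 < c := lt_of_lt_of_le hc₁0 hc.1
      have hcos : Real.cos (hfun c) ≠ 0 := by
        refine (Real.cos_pos_of_mem_Ioo ⟨hlow c hc0, ?_⟩).ne'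
        exact lt_of_le_of_lt (hvalid c hc) hφlt
      apply ContinuousAt.continuousWithinAt
      exact ContinuousAt.mul continuousAt_id
        ((Real.continuousAt_tan.mpr hcos).comp (hhcontAt c hc0))
    have hGc₂ : B < G c₂ := by
      have hGeq : G c₂ = c₂ * ((|B| + 1) / c₁) := by
        simp only [hGdef]
        rw [hhc₂φ, htanφ]
      rw [hGeq]
      have h2 : c₁ * ((|B| + 1) / c₁) = |B| + 1 := by field_simp
      have hr : 0 < (|B| + 1) / c₁ := by positivity
      have h3 := mul_le_mul_of_nonneg_right hc₂1 hr.le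
      have := le_abs_self B
      linarith
    have hmem2 : B ∈ G '' Set.Icc c₁ c₂ :=
      intermediate_value_Icc hc₂1 hGcont ⟨hc₁G.le, hGc₂.le⟩
    obtain ⟨c, hcmem, hGc⟩ := hmem2
    have hc0 : 0 < c := lt_of_lt_of_le hc₁0 hcmem.1
    have hcup : Real.arctan (A / c) + c * l / (2 * ν) < π / 2 := by
      have h1 := hvalid c hcmem
      simp only [hhdef] at h1
      linarith
    have hsol := trig_sol (l := l) hν hl hc0 hcup
    have hfl : c * Real.tan (Real.arctan (A / c) + c * l / (2 * ν)) = B := by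
      rw [← hGc]
    exact ⟨_, hfl ▸ hsol⟩

/-- Reflection symmetry of the problem. -/
lemma reflect {ν l A B : ℝ} {u : ℝ → ℝ}
    (h : IsStationaryBurgersSolution ν l (-B) (-A) u) :
    IsStationaryBurgersSolution ν l A B (fun x => -u (l - x)) := by
  obtain ⟨u', u'', h1, h2, h3, h4, h5, h6⟩ := h
  have hmem : ∀ x : ℝ, x ∈ Set.Icc 0 l → l - x ∈ Set.Icc 0 l := by
    intro x hx
    exact ⟨by linarith [hx.2], by linarith [hx.1]⟩
  have hlin : ∀ x : ℝ, HasDerivAt (fun y : ℝ => l - y) (-1) x :=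
    fun x => (hasDerivAt_id x).const_sub l
  refine ⟨fun x => u' (l - x), fun x => -u'' (l - x), ?_, ?_, ?_, ?_, ?_, ?_⟩
  · intro x hx
    have := ((h1 (l - x) (hmem x hx)).comp x (hlin x)).neg
    simp [Function.comp_def] at this
    exact this
  · intro x hx
    have := (h2 (l - x) (hmem x hx)).comp x (hlin x)
    simpa [Function.comp_def] using this
  · have hc : ContinuousOn (fun x : ℝ => l - x) (Set.Icc 0 l) :=
      (continuous_const.sub continuous_id).continuousOn
    exact (h3.comp hc fun x hx => hmem x hx).neg
  · intro x hx
    have h7 := h4 (l - x) (hmem x hx)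
    show ν * -u'' (l - x) = -u (l - x) * u' (l - x)
    linear_combination (-1 : ℝ) * h7
  · show -u (l - 0) = A
    rw [sub_zero, h6]; ring
  · show -u (l - l) = B
    rw [sub_self, h5]; ring

/-- Existence, all cases. -/
lemma exists_sol {ν l A B : ℝ} (hν : 0 < ν) (hl : 0 < l) :
    ∃ u, IsStationaryBurgersSolution ν l A B u := by
  rcases lt_trichotomy A B with hAB | hAB | hAB
  · rcases lt_or_ge A 0 with hA | hA
    · exact exists_inc_neg hν hl hA hAB
    · obtain ⟨u, hu⟩ := exists_inc_neg (A := -B) (B := -A) hν hl (by linarith) (by linarith)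
      exact ⟨_, reflect hu⟩
  · refine ⟨fun _ => A, sol_of_riccati (k := -(A ^ 2)) hν.ne' (fun x hx => ?_) rfl hAB⟩
    have h0 : HasDerivAt (fun _ : ℝ => A) 0 x := hasDerivAt_const x A
    convert h0 using 1
    show ((A : ℝ) ^ 2 + -(A ^ 2)) / (2 * ν) = 0
    ring
  · exact exists_dec hν hl hAB

/-! ### Uniqueness -/

lemma aux_no_bridge {l : ℝ} (hl : 0 < l) {w w' : ℝ → ℝ}
    (hw : ∀ x ∈ Set.Icc 0 l, HasDerivAt w (w' x) x)
    (hz : ∀ x ∈ Set.Icc 0 l, w x = 0 → 0 < w' x)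
    (h0 : w 0 = 0) (hL : w l = 0) : False := by
  have h0m : (0:ℝ) ∈ Set.Icc (0:ℝ) l := ⟨le_rfl, hl.le⟩
  have hw0 : 0 < w' 0 := hz 0 h0m h0
  have hs0 : Tendsto (slope w 0) (𝓝[>] (0:ℝ)) (𝓝 (w' 0)) :=
    (hasDerivAt_iff_tendsto_slope.1 (hw 0 h0m)).mono_left
      (nhdsWithin_mono _ fun x hx => ne_of_gt hx)
  have hev : ∀ᶠ x in 𝓝[>] (0:ℝ), 0 < slope w 0 x := hs0.eventually (eventually_gt_nhds hw0)
  obtain ⟨δ0, hδ0, hδsub⟩ := mem_nhdsGT_iff_exists_Ioo_subset.mp hev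
  rw [Set.mem_Ioi] at hδ0
  have hpos : ∀ x ∈ Set.Ioo (0:ℝ) δ0, 0 < w x := by
    intro x hx
    have h1 : 0 < slope w 0 x := hδsub hx
    rw [slope_def_field, h0, sub_zero, sub_zero] at h1
    have hx0 : 0 < x := hx.1
    have h2 := mul_pos h1 hx0
    rwa [div_mul_cancel₀ _ hx0.ne'] at h2
  set δ := min δ0 l with hδdef
  have hδ : 0 < δ := lt_min hδ0 hl
  have hδl : δ ≤ l := min_le_right _ _
  have hδδ0 : δ ≤ δ0 := min_le_left _ _
  set Tset := {x ∈ Set.Icc (δ/2) l | w x ≤ 0} with hTset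
  have hsub : Set.Icc (δ/2) l ⊆ Set.Icc 0 l := Set.Icc_subset_Icc (by linarith) le_rfl
  have hwc : ContinuousOn w (Set.Icc (δ/2) l) :=
    fun x hx => ((hw x (hsub hx)).continuousAt).continuousWithinAt
  have hclosed : IsClosed Tset := by
    have he : Tset = Set.Icc (δ/2) l ∩ w ⁻¹' (Set.Iic 0) := by
      ext x; simp [hTset, Set.mem_sep_iff]
    rw [he]
    exact hwc.preimage_isClosed_of_isClosed isClosed_Icc isClosed_Iic
  have hTl : l ∈ Tset := ⟨⟨by linarith, le_rfl⟩, hL.le⟩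
  have hbdd : BddBelow Tset := ⟨δ/2, fun x hx => hx.1.1⟩
  have hne : Tset.Nonempty := ⟨l, hTl⟩
  set z := sInf Tset with hzdef
  have hzT : z ∈ Tset := hclosed.csInf_mem hne hbdd
  have hz1 : δ/2 ≤ z := hzT.1.1
  have hz2 : z ≤ l := hzT.1.2
  have hz0 : 0 < z := lt_of_lt_of_le (by linarith) hz1
  have hzIcc : z ∈ Set.Icc (0:ℝ) l := ⟨hz0.le, hz2⟩
  have hposz : ∀ x, 0 < x → x < z → 0 < w x := by
    intro x hx1 hx2
    by_cases hcase : x < δ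
    · exact hpos x ⟨hx1, lt_of_lt_of_le hcase hδδ0⟩
    · push_neg at hcase
      have hnotmem : x ∉ Tset := fun hmem => absurd (csInf_le hbdd hmem) (not_le.mpr hx2)
      have hxmem : x ∈ Set.Icc (δ/2) l := ⟨by linarith, by linarith⟩
      by_contra hcon
      push_neg at hcon
      exact hnotmem ⟨hxmem, hcon⟩
  have hcz : ContinuousAt w z := (hw z hzIcc).continuousAt
  have hlt : Tendsto w (𝓝[<] z) (𝓝 (w z)) := hcz.tendsto.mono_left nhdsWithin_le_nhds
  have hIoo : Set.Ioo 0 z ∈ 𝓝[<] z := Ioo_mem_nhdsLT_of_mem ⟨hz0, le_rfl⟩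
  have hevp : ∀ᶠ x in 𝓝[<] z, 0 ≤ w x :=
    Filter.eventually_of_mem hIoo fun x hx => (hposz x hx.1 hx.2).le
  have hwz0 : 0 ≤ w z := ge_of_tendsto hlt hevp
  have hwz : w z = 0 := le_antisymm hzT.2 hwz0
  have hwz' : 0 < w' z := hz z hzIcc hwz
  have hsz : Tendsto (slope w z) (𝓝[<] z) (𝓝 (w' z)) :=
    (hasDerivAt_iff_tendsto_slope.1 (hw z hzIcc)).mono_left
      (nhdsWithin_mono _ fun x hx => ne_of_lt hx)
  have hevn : ∀ᶠ x in 𝓝[<] z, slope w z x ≤ 0 := by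
    refine Filter.eventually_of_mem hIoo fun x hx => ?_
    rw [slope_def_field, hwz, sub_zero]
    exact (div_neg_of_pos_of_neg (hposz x hx.1 hx.2) (by linarith [hx.2])).le
  have hfin : w' z ≤ 0 := le_of_tendsto hsz hevn
  linarith

lemma energy_const {ν l : ℝ} {f f' f'' : ℝ → ℝ}
    (hf : ∀ x ∈ Set.Icc 0 l, HasDerivAt f (f' x) x)
    (hf' : ∀ x ∈ Set.Icc 0 l, HasDerivAt f' (f'' x) x)
    (hode : ∀ x ∈ Set.Icc 0 l, ν * f'' x = f x * f' x) :
    ∀ x ∈ Set.Icc 0 l, ν * f' x - f x * f x / 2 = ν * f' 0 - f 0 * f 0 / 2 := by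
  have cf : ContinuousOn f (Set.Icc 0 l) :=
    fun x hx => ((hf x hx).continuousAt).continuousWithinAt
  have cf' : ContinuousOn f' (Set.Icc 0 l) :=
    fun x hx => ((hf' x hx).continuousAt).continuousWithinAt
  have hcont : ContinuousOn (fun x => ν * f' x - f x * f x / 2) (Set.Icc 0 l) :=
    (continuousOn_const.mul cf').sub ((cf.mul cf).div_const 2)
  have hderiv : ∀ x ∈ Set.Ico 0 l,
      HasDerivWithinAt (fun x => ν * f' x - f x * f x / 2) 0 (Set.Ici x) x := by
    intro x hx
    have hx' : x ∈ Set.Icc 0 l := Set.Ico_subset_Icc_self hx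
    have h := ((hf' x hx').const_mul ν).sub (((hf x hx').mul (hf x hx')).div_const 2)
    have he : ν * f'' x - (f' x * f x + f x * f' x) / 2 = 0 := by
      linear_combination hode x hx'
    rw [← he]
    exact h.hasDerivWithinAt
  exact fun x hx => constant_of_has_deriv_right_zero hcont hderiv x hx

lemma uniqueness {ν l A B : ℝ} (hν : 0 < ν) (hl : 0 < l) {u v : ℝ → ℝ}
    (hu : IsStationaryBurgersSolution ν l A B u) (hv : IsStationaryBurgersSolution ν l A B v) :
    ∀ x ∈ Set.Icc 0 l, u x = v x := by
  obtain ⟨u', u'', hu1, hu2, hu3, hu4, hu5, hu6⟩ := hu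
  obtain ⟨v', v'', hv1, hv2, hv3, hv4, hv5, hv6⟩ := hv
  have hEu := energy_const hu1 hu2 hu4
  have hEv := energy_const hv1 hv2 hv4
  set Cu := ν * u' 0 - u 0 * u 0 / 2 with hCudef
  set Cv := ν * v' 0 - v 0 * v 0 / 2 with hCvdef
  have key : ∀ (p p' q q' : ℝ → ℝ) (Cp Cq : ℝ),
      (∀ x ∈ Set.Icc 0 l, HasDerivAt p (p' x) x) →
      (∀ x ∈ Set.Icc 0 l, HasDerivAt q (q' x) x) →
      (∀ x ∈ Set.Icc 0 l, ν * p' x - p x * p x / 2 = Cp) →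
      (∀ x ∈ Set.Icc 0 l, ν * q' x - q x * q x / 2 = Cq) →
      p 0 = q 0 → p l = q l → Cq < Cp → False := by
    intro p p' q q' Cp Cq hp hq hpE hqE hb0 hbl hC
    refine aux_no_bridge hl (w := fun x => p x - q x) (w' := fun x => p' x - q' x)
      (fun x hx => (hp x hx).sub (hq x hx)) (fun x hx h0x => ?_) (by simp [hb0]) (by simp [hbl])
    have h1 := hpE x hx
    have h2 := hqE x hx
    have h0x' : p x - q x = 0 := h0x
    have h3 : p x = q x := by rwa [sub_eq_zero] at h0x'
    rw [h3] at h1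
    show 0 < p' x - q' x
    have h4 : ν * (p' x - q' x) = Cp - Cq := by linarith
    by_contra hcon
    push_neg at hcon
    nlinarith [mul_nonpos_of_nonneg_of_nonpos hν.le hcon]
  have hCuv : Cu = Cv := by
    by_contra hne0
    rcases lt_or_gt_of_ne hne0 with h | h
    · exact key v v' u u' Cv Cu hv1 hu1 hEv hEu (hv5.trans hu5.symm) (hv6.trans hu6.symm) h
    · exact key u u' v v' Cu Cv hu1 hv1 hEu hEv (hu5.trans hv5.symm) (hu6.trans hv6.symm) h
  have cu : ContinuousOn u (Set.Icc 0 l) :=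
    fun x hx => ((hu1 x hx).continuousAt).continuousWithinAt
  have cv : ContinuousOn v (Set.Icc 0 l) :=
    fun x hx => ((hv1 x hx).continuousAt).continuousWithinAt
  have hcuv : ContinuousOn (fun y => (u y + v y) / (2 * ν)) (Set.Icc 0 l) :=
    (cu.add cv).div_const (2 * ν)
  obtain ⟨K, hK⟩ := isCompact_Icc.exists_bound_of_continuousOn hcuv
  have hwcont : ContinuousOn (fun x => u x - v x) (Set.Icc 0 l) := cu.sub cv
  have main := norm_le_gronwallBound_of_norm_deriv_right_le (f := fun x => u x - v x)
      (f' := fun x => u' x - v' x) (δ := 0) (K := K) (ε := 0) (a := 0) (b := l)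
      hwcont
      (fun x hx => ((hu1 x (Set.Ico_subset_Icc_self hx)).sub
        (hv1 x (Set.Ico_subset_Icc_self hx))).hasDerivWithinAt)
      (by simp [hu5, hv5])
      ?_
  · intro x hx
    have hx0 := main x hx
    rw [gronwallBound_ε0_δ0] at hx0
    have h1 : ‖u x - v x‖ ≤ 0 := hx0
    rw [← sub_eq_zero]
    exact norm_le_zero_iff.mp h1
  · intro t ht
    have ht' : t ∈ Set.Icc 0 l := Set.Ico_subset_Icc_self ht
    have h1 := hEu t ht'
    have h2 := hEv t ht'
    rw [hCuv] at h1
    have hrel : u' t - v' t = ((u t + v t) / (2 * ν)) * (u t - v t) := by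
      field_simp
      linear_combination 2 * h1 - 2 * h2
    show ‖u' t - v' t‖ ≤ K * ‖u t - v t‖ + 0
    rw [hrel, Real.norm_eq_abs, Real.norm_eq_abs, abs_mul, add_zero]
    have := hK t ht'
    rw [Real.norm_eq_abs] at this
    exact mul_le_mul_of_nonneg_right this (abs_nonneg _)

end BurgersAux

/-- For every `ν > 0`, `l > 0` and all `A B : ℝ`, the stationary problem for Burgers'
equation with Dirichlet boundary conditions has exactly one solution on `[0, l]`. -/
theorem burgers_stationary_existence_uniqueness
    (ν l A B : ℝ) (hν : 0 < ν) (hl : 0 < l) :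
    (∃ u : ℝ → ℝ, IsStationaryBurgersSolution ν l A B u) ∧
    (∀ u v : ℝ → ℝ, IsStationaryBurgersSolution ν l A B u →
      IsStationaryBurgersSolution ν l A B v → ∀ x ∈ Set.Icc 0 l, u x = v x) := by
  exact ⟨BurgersAux.exists_sol hν hl, fun u v hu hv => BurgersAux.uniqueness hν hl hu hv⟩
end

section
/- Let ν > 0, l > 0, A, B ∈ ℝ with A ≠ B, and let k > 0 and x₀ ∈ ℝ with x₀ ≠ 0 and x₀ ≠ l. Suppose the function X(x) = sinh(k(x − x₀)) satisfies the Robin boundary conditions X'(0) + (A/(2ν)) X(0) = 0 and X'(l) + (B/(2ν)) X(l) = 0. Then ξ := kl satisfies the transcendental equation coth ξ = p/ξ − q ξ, where p = l·A·B/(2ν(B − A)) and q = 2ν/(l(B − A)). -/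
/-- If the eigenfunction `X(x) = sinh(k(x − x₀))` satisfies the Robin boundary
conditions `X'(0) + (A/(2ν)) X(0) = 0` and `X'(l) + (B/(2ν)) X(l) = 0` with
`A ≠ B`, `x₀ ≠ 0`, `x₀ ≠ l`, then `ξ = kl` satisfies the transcendental equation
`coth ξ = p/ξ − q ξ` with `p = lAB/(2ν(B − A))` and `q = 2ν/(l(B − A))`. -/
theorem robin_sinh_eigenfunction_transcendental_equation
    (ν l A B k x₀ : ℝ) (hν : 0 < ν) (hl : 0 < l) (hAB : A ≠ B) (hk : 0 < k)
    (hx₀0 : x₀ ≠ 0) (hx₀l : x₀ ≠ l)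
    (X : ℝ → ℝ) (hX : X = fun x => Real.sinh (k * (x - x₀)))
    (hrobin0 : deriv X 0 + (A / (2 * ν)) * X 0 = 0)
    (hrobinl : deriv X l + (B / (2 * ν)) * X l = 0) :
    Real.coth (k * l) =
      (l * A * B / (2 * ν * (B - A))) / (k * l)
        - (2 * ν / (l * (B - A))) * (k * l) := by
  have hderiv : ∀ x : ℝ, deriv X x = Real.cosh (k * (x - x₀)) * k := by
    intro x
    subst hX
    have h : HasDerivAt (fun x : ℝ => Real.sinh (k * (x - x₀)))
        (Real.cosh (k * (x - x₀)) * k) x := by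
      have hu : HasDerivAt (fun x : ℝ => k * (x - x₀)) k x := by
        simpa using (((hasDerivAt_id x).sub_const x₀).const_mul k)
      exact (Real.hasDerivAt_sinh (k * (x - x₀))).comp x hu
    exact h.deriv
  rw [hderiv] at hrobin0 hrobinl
  rw [hX] at hrobin0 hrobinl
  simp only [zero_sub] at hrobin0
  set a : ℝ := k * x₀ with ha
  set b : ℝ := k * (l - x₀) with hb
  have hν' : (2 : ℝ) * ν ≠ 0 := by positivity
  -- boundary relations
  have e1 : 2 * ν * k * Real.cosh a = A * Real.sinh a := by
    have : Real.cosh (k * -x₀) * k + A / (2 * ν) * Real.sinh (k * -x₀) = 0 := hrobin0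
    rw [show k * -x₀ = -a by ring, Real.cosh_neg, Real.sinh_neg] at this
    field_simp at this
    linarith
  have e2 : 2 * ν * k * Real.cosh b = -B * Real.sinh b := by
    have : Real.cosh (k * (l - x₀)) * k + B / (2 * ν) * Real.sinh (k * (l - x₀)) = 0 :=
      hrobinl
    rw [← hb] at this
    field_simp at this
    linarith
  have hkl : k * l = a + b := by rw [ha, hb]; ring
  have hsl : Real.sinh (k * l) ≠ 0 := by
    rw [Real.sinh_ne_zero]
    positivity
  have hC : 4 * ν ^ 2 * k ^ 2 * Real.cosh (k * l)
      = (4 * ν ^ 2 * k ^ 2 - A * B) * (Real.sinh a * Real.sinh b) := by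
    rw [hkl, Real.cosh_add]
    linear_combination (2 * ν * k * Real.cosh b) * e1 + (A * Real.sinh a) * e2
  have hS : 2 * ν * k * Real.sinh (k * l)
      = (A - B) * (Real.sinh a * Real.sinh b) := by
    rw [hkl, Real.sinh_add]
    linear_combination Real.sinh a * e2 + Real.sinh b * e1
  have key : 4 * ν ^ 2 * k ^ 2 * (B - A) * Real.cosh (k * l)
      = (A * B - 4 * ν ^ 2 * k ^ 2) * (2 * ν * k * Real.sinh (k * l)) := by
    linear_combination (B - A) * hC - (A * B - 4 * ν ^ 2 * k ^ 2) * hS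
  have hBA : B - A ≠ 0 := sub_ne_zero.mpr (Ne.symm hAB)
  have hk0 : k ≠ 0 := ne_of_gt hk
  have hl0 : l ≠ 0 := ne_of_gt hl
  have hν0 : ν ≠ 0 := ne_of_gt hν
  have h4 : 4 * ν ^ 2 * k ^ 2 * (B - A) ≠ 0 := by
    apply mul_ne_zero _ hBA
    positivity
  have hc : Real.cosh (k * l)
      = (A * B - 4 * ν ^ 2 * k ^ 2) * (2 * ν * k * Real.sinh (k * l))
          / (4 * ν ^ 2 * k ^ 2 * (B - A)) := by
    rw [eq_div_iff h4]
    linear_combination key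
  rw [Real.coth, div_eq_iff hsl, hc]
  field_simp
  ring
end

section
/- Let ν > 0, l > 0, A ∈ ℝ, and let k > 0 and x₀ ∈ ℝ. Suppose the function X(x) = sin(k(x − x₀)) satisfies the Robin boundary conditions X'(0) + (A/(2ν)) X(0) = 0 and X'(l) + (A/(2ν)) X(l) = 0 (equal boundary constants, corresponding to A = B). Then there exists a positive integer n such that k = πn/l. -/
/-- In the exceptional case of equal Robin boundary constants (`A = B`), the
eigenfunction `X(x) = sin(k(x − x₀))` forces `k = πn/l` for some positive
integer `n`. -/
theorem robin_equal_constants_sin_eigenvalues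
    (ν l A k x₀ : ℝ) (hν : 0 < ν) (hl : 0 < l) (hk : 0 < k)
    (X : ℝ → ℝ) (hX : X = fun x => Real.sin (k * (x - x₀)))
    (hrobin0 : deriv X 0 + (A / (2 * ν)) * X 0 = 0)
    (hrobinl : deriv X l + (A / (2 * ν)) * X l = 0) :
    ∃ n : ℕ, 0 < n ∧ k = Real.pi * n / l := by
  subst hX
  set c : ℝ := A / (2 * ν) with hc
  have hd : ∀ t : ℝ, deriv (fun x => Real.sin (k * (x - x₀))) t
      = Real.cos (k * (t - x₀)) * k := by
    intro t
    have h1 : HasDerivAt (fun x : ℝ => k * (x - x₀)) k t := by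
      simpa using (((hasDerivAt_id t).sub_const x₀).const_mul k)
    exact ((Real.hasDerivAt_sin (k * (t - x₀))).comp t h1).deriv
  rw [hd] at hrobin0 hrobinl
  set θ₁ : ℝ := k * (0 - x₀) with hθ₁
  set θ₂ : ℝ := k * (l - x₀) with hθ₂
  -- From the two conditions: k cos θᵢ = -c sin θᵢ
  have h1 : Real.cos θ₁ * k = -(c * Real.sin θ₁) := by linarith
  have h2 : Real.cos θ₂ * k = -(c * Real.sin θ₂) := by linarith
  have hsin : Real.sin (k * l) = 0 := by
    have hθ : k * l = θ₂ - θ₁ := by rw [hθ₁, hθ₂]; ring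
    have : k * Real.sin (θ₂ - θ₁) = 0 := by
      rw [Real.sin_sub]
      have : k * (Real.sin θ₂ * Real.cos θ₁ - Real.cos θ₂ * Real.sin θ₁)
          = Real.sin θ₂ * (Real.cos θ₁ * k) - Real.sin θ₁ * (Real.cos θ₂ * k) := by ring
      rw [this, h1, h2]; ring
    rw [hθ]
    rcases mul_eq_zero.1 this with h | h
    · exact absurd h (ne_of_gt hk)
    · exact h
  rw [Real.sin_eq_zero_iff] at hsin
  obtain ⟨m, hm⟩ := hsin
  have hπ := Real.pi_pos
  have hmpos : 0 < m := by
    by_contra h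
    push_neg at h
    have : (m : ℝ) * Real.pi ≤ 0 := by
      have : (m : ℝ) ≤ 0 := by exact_mod_cast h
      nlinarith
    nlinarith [mul_pos hk hl]
  refine ⟨m.toNat, by omega, ?_⟩
  have hmn : ((m.toNat : ℕ) : ℝ) = (m : ℝ) := by
    exact_mod_cast congrArg (Int.cast : ℤ → ℝ) (Int.toNat_of_nonneg hmpos.le)
  rw [hmn]
  field_simp
  linarith [hm]
end

section
/- Let ν > 0, l > 0, A ∈ ℝ, and let X : ℝ → ℝ be twice continuously differentiable on [0, l] with X(x) ≠ 0 for all x ∈ [0, l]. Suppose −X''(x) = λ X(x) on [0, l] for some λ ∈ ℝ, and X satisfies the Robin boundary conditions X'(0) + (A/(2ν)) X(0) = 0 and X'(l) + (A/(2ν)) X(l) = 0. Then λ = −(A/(2ν))² and X(x) = X(0) · exp(−A x/(2ν)) for all x ∈ [0, l]. -/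
/-- In the exceptional case of equal Robin boundary constants (`A = B`), a
nonvanishing eigenfunction of `−X'' = λX` on `[0, l]` has eigenvalue
`λ = −(A/(2ν))²` and the form `X(x) = X(0)·exp(−Ax/(2ν))`. -/
theorem robin_equal_constants_ground_eigenfunction
    (ν l A lam : ℝ) (hν : 0 < ν) (hl : 0 < l)
    (X X' X'' : ℝ → ℝ)
    (hder1 : ∀ x ∈ Set.Icc 0 l, HasDerivAt X (X' x) x)
    (hder2 : ∀ x ∈ Set.Icc 0 l, HasDerivAt X' (X'' x) x)
    (hcont : ContinuousOn X'' (Set.Icc 0 l))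
    (hX0 : ∀ x ∈ Set.Icc 0 l, X x ≠ 0)
    (hode : ∀ x ∈ Set.Icc 0 l, -X'' x = lam * X x)
    (hrobin0 : X' 0 + (A / (2 * ν)) * X 0 = 0)
    (hrobinl : X' l + (A / (2 * ν)) * X l = 0) :
    lam = -(A / (2 * ν)) ^ 2 ∧
    ∀ x ∈ Set.Icc 0 l, X x = X 0 * Real.exp (-A * x / (2 * ν)) := by
  set k : ℝ := A / (2 * ν) with hk
  set μ : ℝ := lam + k ^ 2 with hμdef
  set Z : ℝ → ℝ := fun x => (X' x + k * X x) * Real.exp (-k * x) with hZ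
  have h0mem : (0:ℝ) ∈ Set.Icc 0 l := ⟨le_refl 0, hl.le⟩
  have hlmem : l ∈ Set.Icc 0 l := ⟨hl.le, le_refl l⟩
  -- derivative of Z
  have hZd : ∀ x ∈ Set.Icc 0 l, HasDerivAt Z (-μ * X x * Real.exp (-k * x)) x := by
    intro x hx
    have h1 : HasDerivAt (fun x => X' x + k * X x) (X'' x + k * X' x) x :=
      (hder2 x hx).add ((hder1 x hx).const_mul k)
    have h2 : HasDerivAt (fun x => Real.exp (-k * x))
        (Real.exp (-k * x) * (-k * 1)) x :=
      ((hasDerivAt_id x).const_mul (-k)).exp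
    have h3 := h1.mul h2
    have hX'' : X'' x = -(lam * X x) := by
      have := hode x hx; linarith
    refine h3.congr_deriv ?_
    rw [hX'']
    ring
  have hZ0 : Z 0 = 0 := by
    simp only [hZ, mul_zero, neg_zero, Real.exp_zero, mul_one]
    exact hrobin0
  have hZl : Z l = 0 := by
    simp only [hZ]
    rw [hrobinl, zero_mul]
  have hXcont : ContinuousOn X (Set.Icc 0 l) :=
    fun x hx => (hder1 x hx).continuousAt.continuousWithinAt
  have hZcont : ContinuousOn Z (Set.Icc 0 l) :=
    fun x hx => (hZd x hx).continuousAt.continuousWithinAt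
  -- X has constant sign
  have hsign : ∀ x ∈ Set.Icc 0 l, 0 < X x * X 0 := by
    intro x hx
    rcases lt_trichotomy (X x * X 0) 0 with h | h | h
    · exfalso
      have hxl : Set.Icc (0:ℝ) x ⊆ Set.Icc 0 l := Set.Icc_subset_Icc le_rfl hx.2
      have hcX : ContinuousOn X (Set.Icc 0 x) := hXcont.mono hxl
      rcases mul_neg_iff.mp h with ⟨hp, hn⟩ | ⟨hn, hp⟩
      · -- 0 < X x, X 0 < 0
        have hmem : (0:ℝ) ∈ Set.Icc (X 0) (X x) := ⟨hn.le, hp.le⟩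
        obtain ⟨c, hc, hc0⟩ := intermediate_value_Icc hx.1 hcX hmem
        exact hX0 c (hxl hc) hc0
      · -- X x < 0, 0 < X 0
        have hmem : (0:ℝ) ∈ Set.Icc (X x) (X 0) := ⟨hn.le, hp.le⟩
        obtain ⟨c, hc, hc0⟩ := intermediate_value_Icc' hx.1 hcX hmem
        exact hX0 c (hxl hc) hc0
    · exact absurd h (mul_ne_zero (hX0 x hx) (hX0 0 h0mem))
    · exact h
  -- μ = 0
  have hμ : μ = 0 := by
    by_contra hμne
    have hX0ne := hX0 0 h0mem
    set r : ℝ := -μ / X 0 with hr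
    have hrne : r ≠ 0 := div_ne_zero (neg_ne_zero.mpr hμne) hX0ne
    have hrw : ∀ x ∈ Set.Icc 0 l, -μ * X x = r * (X x * X 0) := by
      intro x hx
      rw [hr, div_mul_eq_mul_div, eq_div_iff hX0ne]
      ring
    rcases hrne.lt_or_gt with hrneg | hrpos
    · have hmono : StrictAntiOn Z (Set.Icc 0 l) := by
        apply strictAntiOn_of_deriv_neg (convex_Icc 0 l) hZcont
        intro x hx
        rw [interior_Icc] at hx
        have hx' : x ∈ Set.Icc 0 l := ⟨hx.1.le, hx.2.le⟩
        rw [(hZd x hx').deriv, hrw x hx', mul_assoc]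
        exact mul_neg_of_neg_of_pos hrneg (mul_pos (hsign x hx') (Real.exp_pos _))
      have := hmono h0mem hlmem hl
      rw [hZ0, hZl] at this; exact lt_irrefl 0 this
    · have hmono : StrictMonoOn Z (Set.Icc 0 l) := by
        apply strictMonoOn_of_deriv_pos (convex_Icc 0 l) hZcont
        intro x hx
        rw [interior_Icc] at hx
        have hx' : x ∈ Set.Icc 0 l := ⟨hx.1.le, hx.2.le⟩
        rw [(hZd x hx').deriv, hrw x hx', mul_assoc]
        exact mul_pos hrpos (mul_pos (hsign x hx') (Real.exp_pos _))
      have := hmono h0mem hlmem hl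
      rw [hZ0, hZl] at this; exact lt_irrefl 0 this
  -- Z ≡ 0, so X' = -k X
  have hZzero : ∀ x ∈ Set.Icc 0 l, Z x = 0 := by
    have hd : ∀ x ∈ Set.Ico 0 l, HasDerivWithinAt Z 0 (Set.Ici x) x := by
      intro x hx
      have hx' : x ∈ Set.Icc 0 l := ⟨hx.1, hx.2.le⟩
      have := (hZd x hx').hasDerivWithinAt (s := Set.Ici x)
      rwa [hμ, neg_zero, zero_mul, zero_mul] at this
    intro x hx
    have := constant_of_has_deriv_right_zero hZcont hd x hx
    rwa [hZ0] at this
  have hX' : ∀ x ∈ Set.Icc 0 l, X' x = -k * X x := by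
    intro x hx
    have := hZzero x hx
    have hexp : Real.exp (-k * x) ≠ 0 := (Real.exp_pos _).ne'
    have : X' x + k * X x = 0 := by
      rcases mul_eq_zero.mp this with h | h
      · exact h
      · exact absurd h hexp
    linarith
  -- g = X e^{kx} is constant
  have hgcont : ContinuousOn (fun x => X x * Real.exp (k * x)) (Set.Icc 0 l) :=
    hXcont.mul (Real.continuous_exp.comp (continuous_const.mul continuous_id)).continuousOn
  have hgd : ∀ x ∈ Set.Ico 0 l,
      HasDerivWithinAt (fun x => X x * Real.exp (k * x)) 0 (Set.Ici x) x := by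
    intro x hx
    have hx' : x ∈ Set.Icc 0 l := ⟨hx.1, hx.2.le⟩
    have h2 : HasDerivAt (fun x => Real.exp (k * x)) (Real.exp (k * x) * (k * 1)) x :=
      ((hasDerivAt_id x).const_mul k).exp
    have h3 := (hder1 x hx').mul h2
    have : X' x * Real.exp (k * x) + X x * (Real.exp (k * x) * (k * 1)) = 0 := by
      rw [hX' x hx']; ring
    rw [this] at h3
    exact h3.hasDerivWithinAt
  have hgconst : ∀ x ∈ Set.Icc 0 l, X x * Real.exp (k * x) = X 0 := by
    intro x hx
    have := constant_of_has_deriv_right_zero hgcont hgd x hx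
    simpa using this
  constructor
  · have : lam = -k ^ 2 := by rw [hμdef] at hμ; linarith
    rw [this]
  · intro x hx
    have h1 := hgconst x hx
    have hexp : Real.exp (k * x) ≠ 0 := (Real.exp_pos _).ne'
    have hXx : X x = X 0 * Real.exp (-(k * x)) := by
      rw [Real.exp_neg]
      field_simp
      linarith [h1]
    rw [hXx]
    congr 1
    rw [hk]
    ring
end

section
/- Let ν > 0, l > 0, λ₀ < λ₁ be real numbers, and m, M, U > 0. Let φˢ, φ̃ : [0, l] × [0, ∞) → ℝ be differentiable in x, set φ = φˢ + φ̃, and suppose for all x ∈ [0, l] and t ≥ 0: |φˢ(x, t)| ≥ m·exp(−ν λ₀ t), |φ̃(x, t)| ≤ M·exp(−ν λ₁ t), |∂_x φ̃(x, t)| ≤ M·exp(−ν λ₁ t), φ(x, t) ≠ 0, and |u(x, t)| ≤ U, where u = −2ν (∂_x φ)/φ and uˢ = −2ν (∂_x φˢ)/φˢ. Then for all x ∈ [0, l] and t ≥ 0: |u(x, t) − uˢ(x, t)| ≤ ((U + 2ν) M / m) · exp(−ν(λ₁ − λ₀) t). In particular, sup_{x ∈ [0, l]} |u(x, t) − uˢ(x,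 t)| → 0 as t → ∞, i.e., the stationary solution is stable. -/
open Filter

/-- Stability of the stationary solution: if the Cole–Hopf image `φ = φˢ + φ̃`
satisfies `|φˢ| ≥ m·exp(−νλ₀t)`, `|φ̃|, |φ̃_x| ≤ M·exp(−νλ₁t)` with `λ₀ < λ₁`,
and the Burgers solution `u = −2ν φ_x/φ` obeys `|u| ≤ U` (maximum principle), then
`|u − uˢ| ≤ ((U + 2ν)M/m)·exp(−ν(λ₁ − λ₀)t)` on `[0, l]`, and in particular
`sup_{x∈[0,l]} |u − uˢ| → 0` as `t → ∞`. -/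
theorem burgers_stationary_solution_stable
    (ν l lam₀ lam₁ m M U : ℝ) (hν : 0 < ν) (hl : 0 < l) (hlam : lam₀ < lam₁)
    (hm : 0 < m) (hM : 0 < M) (hU : 0 < U)
    (φs φt : ℝ → ℝ → ℝ)
    (hφsdiff : ∀ t ≥ (0:ℝ), ∀ x ∈ Set.Icc 0 l, DifferentiableAt ℝ (fun y => φs y t) x)
    (hφtdiff : ∀ t ≥ (0:ℝ), ∀ x ∈ Set.Icc 0 l, DifferentiableAt ℝ (fun y => φt y t) x)
    (φ : ℝ → ℝ → ℝ) (hφ : ∀ x t : ℝ, φ x t = φs x t + φt x t)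
    (hφs_lower : ∀ x ∈ Set.Icc 0 l, ∀ t ≥ (0:ℝ),
      m * Real.exp (-ν * lam₀ * t) ≤ |φs x t|)
    (hφt_upper : ∀ x ∈ Set.Icc 0 l, ∀ t ≥ (0:ℝ),
      |φt x t| ≤ M * Real.exp (-ν * lam₁ * t))
    (hφtx_upper : ∀ x ∈ Set.Icc 0 l, ∀ t ≥ (0:ℝ),
      |deriv (fun y => φt y t) x| ≤ M * Real.exp (-ν * lam₁ * t))
    (hφ0 : ∀ x ∈ Set.Icc 0 l, ∀ t ≥ (0:ℝ), φ x t ≠ 0)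
    (u us : ℝ → ℝ → ℝ)
    (hu : ∀ x t : ℝ, u x t = -2 * ν * deriv (fun y => φ y t) x / φ x t)
    (hus : ∀ x t : ℝ, us x t = -2 * ν * deriv (fun y => φs y t) x / φs x t)
    (humax : ∀ x ∈ Set.Icc 0 l, ∀ t ≥ (0:ℝ), |u x t| ≤ U) :
    (∀ x ∈ Set.Icc 0 l, ∀ t ≥ (0:ℝ),
      |u x t - us x t| ≤ ((U + 2 * ν) * M / m) * Real.exp (-ν * (lam₁ - lam₀) * t)) ∧
    Tendsto (fun t => ⨆ x : Set.Icc (0:ℝ) l, |u x t - us x t|) atTop (nhds 0) := by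

  have key : ∀ x ∈ Set.Icc 0 l, ∀ t ≥ (0:ℝ),
      |u x t - us x t| ≤ ((U + 2 * ν) * M / m) * Real.exp (-ν * (lam₁ - lam₀) * t) := by
    intro x hx t ht
    have he0 : (0:ℝ) < Real.exp (-ν * lam₀ * t) := Real.exp_pos _
    have hlow := hφs_lower x hx t ht
    have hspos : 0 < |φs x t| := lt_of_lt_of_le (by positivity) hlow
    have hs0 : φs x t ≠ 0 := fun h => by simp [h] at hspos
    have hφne : φ x t ≠ 0 := hφ0 x hx t ht
    have hne' : φs x t + φt x t ≠ 0 := (hφ x t) ▸ hφne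
    have hderiv : deriv (fun y => φ y t) x
        = deriv (fun y => φs y t) x + deriv (fun y => φt y t) x := by
      have hfun : (fun y => φ y t) = fun y => φs y t + φt y t := funext fun y => hφ y t
      rw [hfun, deriv_fun_add (hφsdiff t ht x hx) (hφtdiff t ht x hx)]
    have heq : u x t - us x t
        = -(u x t * φt x t + 2 * ν * deriv (fun y => φt y t) x) / φs x t := by
      rw [hu, hus, hderiv, hφ x t]
      field_simp
      ring
    rw [heq, abs_div]
    have hnum : |-(u x t * φt x t + 2 * ν * deriv (fun y => φt y t) x)|
        ≤ (U + 2 * ν) * (M * Real.exp (-ν * lam₁ * t)) := by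
      rw [abs_neg]
      calc |u x t * φt x t + 2 * ν * deriv (fun y => φt y t) x|
          ≤ |u x t * φt x t| + |2 * ν * deriv (fun y => φt y t) x| := abs_add_le _ _
        _ = |u x t| * |φt x t| + (2 * ν) * |deriv (fun y => φt y t) x| := by
            rw [abs_mul, abs_mul, abs_of_nonneg (by positivity : (0:ℝ) ≤ 2 * ν)]
        _ ≤ U * (M * Real.exp (-ν * lam₁ * t)) + (2 * ν) * (M * Real.exp (-ν * lam₁ * t)) := by
            gcongr
            · exact humax x hx t ht
            · exact hφt_upper x hx t ht
            · exact hφtx_upper x hx t ht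
        _ = (U + 2 * ν) * (M * Real.exp (-ν * lam₁ * t)) := by ring
    have hstep : |-(u x t * φt x t + 2 * ν * deriv (fun y => φt y t) x)| / |φs x t|
        ≤ ((U + 2 * ν) * (M * Real.exp (-ν * lam₁ * t))) / (m * Real.exp (-ν * lam₀ * t)) :=
      div_le_div₀ (by positivity) hnum (by positivity) hlow
    refine hstep.trans_eq ?_
    rw [show -ν * (lam₁ - lam₀) * t = -ν * lam₁ * t - -ν * lam₀ * t by ring, Real.exp_sub]
    field_simp
  refine ⟨key, ?_⟩
  have hne : Nonempty (Set.Icc (0:ℝ) l) := ⟨⟨0, le_refl 0, hl.le⟩⟩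
  have hg : Tendsto (fun t => ((U + 2 * ν) * M / m) * Real.exp (-ν * (lam₁ - lam₀) * t))
      atTop (nhds 0) := by
    rw [show (0:ℝ) = ((U + 2 * ν) * M / m) * 0 by ring]
    apply Tendsto.const_mul
    have h1 : Tendsto (fun t : ℝ => -ν * (lam₁ - lam₀) * t) atTop atBot := by
      have : Tendsto (fun t : ℝ => (ν * (lam₁ - lam₀)) * t) atTop atTop :=
        Tendsto.const_mul_atTop (by nlinarith) tendsto_id
      have h2 := tendsto_neg_atTop_atBot.comp this
      convert h2 using 2 with t
      simp [Function.comp]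
    exact Real.tendsto_exp_atBot.comp h1
  apply squeeze_zero' (g := fun t => ((U + 2 * ν) * M / m) * Real.exp (-ν * (lam₁ - lam₀) * t))
  · exact Eventually.of_forall fun t => Real.iSup_nonneg fun x => abs_nonneg _
  · filter_upwards [eventually_ge_atTop (0:ℝ)] with t ht
    exact ciSup_le fun x => key x x.2 t ht
  · exact hg
end

section
/- Let ν > 0, l > 0, 0 < k₀ < k₁, x₀, x₁ ∈ ℝ, C > 0 with C·sin(k₀(x − x₀)) > 0 for all x ∈ [0, l], and α ≠ 0. Define the stationary solution uˢ(x) = −2ν k₀ cot(k₀(x − x₀)) and, for each t large enough that the denominator is nonvanishing on [0, l], define u(x, t) = −2ν [C k₀ cos(k₀(x − x₀)) + α k₁ cos(k₁(x − x₁)) exp(−ν(k₁² − k₀²)t)] / [C sin(k₀(x − x₀)) + α sin(k₁(x − x₁)) exp(−ν(k₁² − k₀²)t)]. Then (1/t)·ln( sup_{x ∈ [0, l]} |u(x, t) − uˢ(x)| ) converges to −ν(k₁² − k₀²) as t → ∞; that is, the Lyapunov exponent of u with respect to the maximum norm equals −ν(λ₁ − λ₀) with λ₀ = k₀², λ₁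 = k₁². -/
open Filter


lemma exists_wronskian_ne (l k₀ k₁ x₀ x₁ : ℝ) (hl : 0 < l)
    (hk₀ : 0 < k₀) (hk : k₀ < k₁)
    (hsin : ∀ x ∈ Set.Icc (0:ℝ) l, 0 < Real.sin (k₀ * (x - x₀))) :
    ∃ x ∈ Set.Icc (0:ℝ) l,
      k₁ * Real.cos (k₁ * (x - x₁)) * Real.sin (k₀ * (x - x₀))
        - k₀ * Real.cos (k₀ * (x - x₀)) * Real.sin (k₁ * (x - x₁)) ≠ 0 := by
  by_contra hcon
  push_neg at hcon
  have hk₁ : 0 < k₁ := hk₀.trans hk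
  have hzero : ∀ x ∈ Set.Ioo (0:ℝ) l, Real.sin (k₁ * (x - x₁)) = 0 := by
    intro x hx
    set V : ℝ → ℝ := fun y => k₁ * Real.cos (k₁ * (y - x₁)) * Real.sin (k₀ * (y - x₀))
      - k₀ * Real.cos (k₀ * (y - x₀)) * Real.sin (k₁ * (y - x₁)) with hVdef
    have hnhds : Set.Ioo (0:ℝ) l ∈ nhds x := isOpen_Ioo.mem_nhds hx
    have hev : V =ᶠ[nhds x] fun _ => (0:ℝ) :=
      Filter.eventually_of_mem hnhds fun y hy => hcon y (Set.Ioo_subset_Icc_self hy)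
    have h1 : HasDerivAt (fun y : ℝ => k₀ * (y - x₀)) k₀ x := by
      simpa using ((hasDerivAt_id x).sub_const x₀).const_mul k₀
    have h2 : HasDerivAt (fun y : ℝ => k₁ * (y - x₁)) k₁ x := by
      simpa using ((hasDerivAt_id x).sub_const x₁).const_mul k₁
    have hs0 : HasDerivAt (fun y : ℝ => Real.sin (k₀*(y-x₀))) (Real.cos (k₀*(x-x₀)) * k₀) x :=
      (Real.hasDerivAt_sin _).comp x h1
    have hs1 : HasDerivAt (fun y : ℝ => Real.sin (k₁*(y-x₁))) (Real.cos (k₁*(x-x₁)) * k₁) x :=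
      (Real.hasDerivAt_sin _).comp x h2
    have hc0 : HasDerivAt (fun y : ℝ => Real.cos (k₀*(y-x₀))) (-Real.sin (k₀*(x-x₀)) * k₀) x :=
      (Real.hasDerivAt_cos _).comp x h1
    have hc1 : HasDerivAt (fun y : ℝ => Real.cos (k₁*(y-x₁))) (-Real.sin (k₁*(x-x₁)) * k₁) x :=
      (Real.hasDerivAt_cos _).comp x h2
    have hdV : HasDerivAt V ((k₀^2 - k₁^2) * (Real.sin (k₀*(x-x₀)) * Real.sin (k₁*(x-x₁)))) x := by
      have := ((hc1.const_mul k₁).mul hs0).sub ((hc0.const_mul k₀).mul hs1)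
      refine this.congr_deriv ?_
      ring
    have hd0 : deriv V x = 0 := by
      rw [hev.deriv_eq]; simp
    rw [hdV.deriv] at hd0
    have hk2 : k₀^2 - k₁^2 ≠ 0 := by nlinarith
    have hs : Real.sin (k₀*(x-x₀)) ≠ 0 := (hsin x (Set.Ioo_subset_Icc_self hx)).ne'
    rcases mul_eq_zero.1 hd0 with h | h
    · exact absurd h hk2
    · rcases mul_eq_zero.1 h with h | h
      · exact absurd h hs
      · exact h
  set a : ℝ := l/4 with ha_def
  set d : ℝ := min (l/4) (Real.pi / (2*k₁)) with hd_def
  have hπ := Real.pi_pos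
  have hd : 0 < d := lt_min (by linarith) (by positivity)
  have hd4 : d ≤ l/4 := min_le_left _ _
  have ha : a ∈ Set.Ioo (0:ℝ) l := ⟨by simp [ha_def]; linarith, by simp [ha_def]; linarith⟩
  have hb : a + d ∈ Set.Ioo (0:ℝ) l := ⟨by simp [ha_def]; linarith, by simp [ha_def]; linarith⟩
  obtain ⟨mm, hm⟩ := Real.sin_eq_zero_iff.1 (hzero a ha)
  obtain ⟨nn, hn⟩ := Real.sin_eq_zero_iff.1 (hzero (a+d) hb)
  have hdiff : ((nn - mm : ℤ) : ℝ) * Real.pi = k₁ * d := by push_cast; nlinarith [hm, hn]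
  have h1 : (0:ℝ) < ((nn - mm : ℤ) : ℝ) * Real.pi := by rw [hdiff]; positivity
  have h2 : ((nn - mm : ℤ) : ℝ) * Real.pi < Real.pi := by
    rw [hdiff]
    have hdle : d ≤ Real.pi / (2*k₁) := min_le_right _ _
    have heq : k₁ * (Real.pi / (2*k₁)) = Real.pi / 2 := by field_simp
    nlinarith [mul_le_mul_of_nonneg_left hdle hk₁.le]
  have h3 : (0:ℝ) < ((nn - mm : ℤ) : ℝ) := by nlinarith
  have h4 : ((nn - mm : ℤ) : ℝ) < 1 := by nlinarith
  have h5 : (0:ℤ) < nn - mm := by exact_mod_cast h3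
  have h6 : (nn - mm : ℤ) < 1 := by exact_mod_cast h4
  omega

lemma burgers_key_id (ν k₀ k₁ C α s0 s1 c0 c1 Et : ℝ)
    (hs0 : s0 ≠ 0) (hD : C * s0 + α * s1 * Et ≠ 0) :
    -2 * ν * (C * k₀ * c0 + α * k₁ * c1 * Et) / (C * s0 + α * s1 * Et)
        - -2 * ν * k₀ * (c0 / s0)
      = -2 * ν * (α * (k₁ * c1 * s0 - k₀ * c0 * s1)) * Et / ((C * s0 + α * s1 * Et) * s0) := by
  rw [mul_div_assoc', div_sub_div _ _ hD hs0]
  ring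


set_option maxHeartbeats 1000000 in
/-- Lyapunov exponent for Burgers' equation: for the explicit two-mode solution
`u(x,t)` (the Cole–Hopf image of `C sin(k₀(x−x₀))e^{−νk₀²t} + α sin(k₁(x−x₁))e^{−νk₁²t}`)
approaching the stationary solution `uˢ(x) = −2ν k₀ cot(k₀(x−x₀))`, the Lyapunov
exponent with respect to the maximum norm is `−ν(k₁² − k₀²) = −ν(λ₁ − λ₀)`. -/
theorem burgers_lyapunov_exponent_two_mode
    (ν l k₀ k₁ x₀ x₁ C α : ℝ) (hν : 0 < ν) (hl : 0 < l)
    (hk₀ : 0 < k₀) (hk : k₀ < k₁) (hα : α ≠ 0)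
    (hC : 0 < C)
    (hCsin : ∀ x ∈ Set.Icc 0 l, 0 < C * Real.sin (k₀ * (x - x₀)))
    (us : ℝ → ℝ) (hus : ∀ x : ℝ, us x = -2 * ν * k₀ * Real.cot (k₀ * (x - x₀)))
    (u : ℝ → ℝ → ℝ)
    (hu : ∀ x t : ℝ, u x t =
      -2 * ν * (C * k₀ * Real.cos (k₀ * (x - x₀))
          + α * k₁ * Real.cos (k₁ * (x - x₁)) * Real.exp (-ν * (k₁ ^ 2 - k₀ ^ 2) * t))
        / (C * Real.sin (k₀ * (x - x₀))
          + α * Real.sin (k₁ * (x - x₁)) * Real.exp (-ν * (k₁ ^ 2 - k₀ ^ 2) * t))) :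
    Tendsto (fun t => Real.log (⨆ x : Set.Icc (0:ℝ) l, |u x t - us x|) / t)
      atTop (nhds (-ν * (k₁ ^ 2 - k₀ ^ 2))) := by
  have hk₁ : 0 < k₁ := hk₀.trans hk
  have hΔ : 0 < k₁ ^ 2 - k₀ ^ 2 := by nlinarith
  have hδ : 0 < ν * (k₁ ^ 2 - k₀ ^ 2) := by positivity
  have hαpos : 0 < |α| := abs_pos.2 hα
  have hne : (Set.Icc (0:ℝ) l).Nonempty := Set.nonempty_Icc.2 hl.le
  haveI : Nonempty (Set.Icc (0:ℝ) l) := hne.to_subtype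
  -- sin positivity
  have hsin : ∀ x ∈ Set.Icc (0:ℝ) l, 0 < Real.sin (k₀ * (x - x₀)) := by
    intro x hx
    have h := hCsin x hx
    by_contra hcw
    push_neg at hcw
    nlinarith
  -- minimum of C sin on the compact interval
  obtain ⟨xm, hxm, hxmin⟩ := isCompact_Icc.exists_isMinOn hne
    ((continuous_const.mul ((Real.continuous_sin.comp
      ((continuous_const.mul (continuous_id.sub continuous_const))))) : Continuous
        fun x : ℝ => C * Real.sin (k₀ * (x - x₀))).continuousOn)
  set m := C * Real.sin (k₀ * (xm - x₀)) with hmdef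
  have hm : 0 < m := hCsin xm hxm
  have hmle : ∀ x ∈ Set.Icc (0:ℝ) l, m ≤ C * Real.sin (k₀ * (x - x₀)) := fun x hx => hxmin hx
  -- point where the Wronskian is nonzero
  obtain ⟨xs, hxs, hW⟩ := exists_wronskian_ne l k₀ k₁ x₀ x₁ hl hk₀ hk hsin
  set V : ℝ → ℝ := fun x => k₁ * Real.cos (k₁ * (x - x₁)) * Real.sin (k₀ * (x - x₀))
      - k₀ * Real.cos (k₀ * (x - x₀)) * Real.sin (k₁ * (x - x₁)) with hVdef
  set E : ℝ → ℝ := fun t => Real.exp (-ν * (k₁ ^ 2 - k₀ ^ 2) * t) with hEdef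
  have hEpos : ∀ t, 0 < E t := fun t => Real.exp_pos _
  -- constants
  set c₁ : ℝ := 2 * ν * (|α| * |V xs|) / (C + |α|) with hc₁def
  set c₂ : ℝ := 2 * ν * (|α| * (k₀ + k₁)) / ((m / 2) * (m / C)) with hc₂def
  have hVxs : 0 < |V xs| := abs_pos.2 hW
  have hc₁ : 0 < c₁ := by positivity
  have hc₂ : 0 < c₂ := by positivity
  set S : ℝ → ℝ := fun t => ⨆ x : Set.Icc (0:ℝ) l, |u x t - us x| with hSdef
  -- main estimate
  have main : ∀ t : ℝ, 0 < t → E t ≤ 1 → E t ≤ m / (2 * |α|) →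
      c₁ * E t ≤ S t ∧ S t ≤ c₂ * E t := by
    intro t ht hE1 hEm
    -- pointwise formula and bounds
    have hpt : ∀ x ∈ Set.Icc (0:ℝ) l,
        |u x t - us x| = 2 * ν * (|α| * |V x|) * E t
          / ((C * Real.sin (k₀ * (x - x₀))
              + α * Real.sin (k₁ * (x - x₁)) * E t) * Real.sin (k₀ * (x - x₀))) ∧
        m / 2 ≤ C * Real.sin (k₀ * (x - x₀)) + α * Real.sin (k₁ * (x - x₁)) * E t := by
      intro x hx
      have hs0 : 0 < Real.sin (k₀ * (x - x₀)) := hsin x hx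
      have hms : m ≤ C * Real.sin (k₀ * (x - x₀)) := hmle x hx
      have habs : |α * Real.sin (k₁ * (x - x₁)) * E t| ≤ m / 2 := by
        rw [abs_mul, abs_mul, abs_of_pos (hEpos t)]
        have h1 : |Real.sin (k₁ * (x - x₁))| ≤ 1 := Real.abs_sin_le_one _
        have h2 : |α| * E t ≤ m / 2 := by
          calc |α| * E t ≤ |α| * (m / (2 * |α|)) :=
            mul_le_mul_of_nonneg_left hEm (abs_nonneg α)
          _ = m / 2 := by field_simp
        nlinarith [mul_le_mul_of_nonneg_left h1 (mul_nonneg (abs_nonneg α) (hEpos t).le),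
          hEpos t, abs_nonneg α]
      have hD : m / 2 ≤ C * Real.sin (k₀ * (x - x₀)) + α * Real.sin (k₁ * (x - x₁)) * E t := by
        have := neg_abs_le (α * Real.sin (k₁ * (x - x₁)) * E t)
        linarith
      have hDpos : 0 < C * Real.sin (k₀ * (x - x₀)) + α * Real.sin (k₁ * (x - x₁)) * E t := by
        linarith
      refine ⟨?_, hD⟩
      have hid : u x t - us x = (-2 * ν * (α * V x) * E t)
          / ((C * Real.sin (k₀ * (x - x₀))
              + α * Real.sin (k₁ * (x - x₁)) * E t) * Real.sin (k₀ * (x - x₀))) := by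
        rw [hu, hus, Real.cot_eq_cos_div_sin, hVdef]
        exact burgers_key_id ν k₀ k₁ C α _ _ _ _ (E t) hs0.ne' hDpos.ne'
      have habs2 : |(-2 * ν * (α * V x) * E t)| = 2 * ν * (|α| * |V x|) * E t := by
        rw [abs_mul, abs_mul, abs_mul, abs_mul, abs_of_pos (hEpos t), abs_of_pos hν,
          abs_neg, abs_two]
      rw [hid, abs_div, habs2, abs_of_pos (by positivity : (0:ℝ) <
        (C * Real.sin (k₀ * (x - x₀)) + α * Real.sin (k₁ * (x - x₁)) * E t)
          * Real.sin (k₀ * (x - x₀)))]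
    -- the sup bound above
    have hub : ∀ x : Set.Icc (0:ℝ) l, |u x t - us x| ≤ c₂ * E t := by
      rintro ⟨x, hx⟩
      obtain ⟨hfor, hD⟩ := hpt x hx
      have hs0 : 0 < Real.sin (k₀ * (x - x₀)) := hsin x hx
      have hms : m ≤ C * Real.sin (k₀ * (x - x₀)) := hmle x hx
      have hs0m : m / C ≤ Real.sin (k₀ * (x - x₀)) := by
        rw [div_le_iff₀ hC]; nlinarith
      have hb1 : ∀ k a b : ℝ, 0 < k → |k * Real.cos a * Real.sin b| ≤ k := by
        intro k a b hkpos
        have h12 : |Real.cos a| * |Real.sin b| ≤ 1 :=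
          mul_le_one₀ (Real.abs_cos_le_one a) (abs_nonneg _) (Real.abs_sin_le_one b)
        calc |k * Real.cos a * Real.sin b| = k * (|Real.cos a| * |Real.sin b|) := by
              rw [abs_mul, abs_mul, abs_of_pos hkpos, mul_assoc]
          _ ≤ k * 1 := mul_le_mul_of_nonneg_left h12 hkpos.le
          _ = k := mul_one k
      have hVb : |V x| ≤ k₀ + k₁ := by
        rw [hVdef]
        calc |k₁ * Real.cos (k₁ * (x - x₁)) * Real.sin (k₀ * (x - x₀))
            - k₀ * Real.cos (k₀ * (x - x₀)) * Real.sin (k₁ * (x - x₁))|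
            ≤ |k₁ * Real.cos (k₁ * (x - x₁)) * Real.sin (k₀ * (x - x₀))|
              + |k₀ * Real.cos (k₀ * (x - x₀)) * Real.sin (k₁ * (x - x₁))| := abs_sub _ _
          _ ≤ k₀ + k₁ := by
              have := hb1 k₁ (k₁ * (x - x₁)) (k₀ * (x - x₀)) hk₁
              have := hb1 k₀ (k₀ * (x - x₀)) (k₁ * (x - x₁)) hk₀
              linarith
      rw [hfor, hc₂def]
      rw [div_mul_eq_mul_div]
      apply div_le_div₀ (by positivity)
      · nlinarith [hEpos t, abs_nonneg (V x), abs_nonneg α, hν,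
          mul_le_mul_of_nonneg_right (mul_le_mul_of_nonneg_left hVb (abs_nonneg α)) (hEpos t).le]
      · positivity
      · nlinarith [hD, hs0m, hm, hC, hs0]
    have hSub : S t ≤ c₂ * E t := ciSup_le hub
    have hBdd : BddAbove (Set.range fun x : Set.Icc (0:ℝ) l => |u x t - us x|) := by
      refine ⟨c₂ * E t, ?_⟩
      rintro _ ⟨x, rfl⟩
      exact hub x
    -- lower bound at xs
    have hlb : c₁ * E t ≤ |u xs t - us xs| := by
      obtain ⟨hfor, hD⟩ := hpt xs hxs
      have hs0 : 0 < Real.sin (k₀ * (xs - x₀)) := hsin xs hxs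
      have hs0le : Real.sin (k₀ * (xs - x₀)) ≤ 1 := Real.sin_le_one _
      have hDle : (C * Real.sin (k₀ * (xs - x₀)) + α * Real.sin (k₁ * (xs - x₁)) * E t)
          * Real.sin (k₀ * (xs - x₀)) ≤ C + |α| := by
        have h1 : α * Real.sin (k₁ * (xs - x₁)) * E t ≤ |α| := by
          calc α * Real.sin (k₁ * (xs - x₁)) * E t ≤ |α * Real.sin (k₁ * (xs - x₁)) * E t| :=
            le_abs_self _
          _ = |α| * |Real.sin (k₁ * (xs - x₁))| * E t := by
              rw [abs_mul, abs_mul, abs_of_pos (hEpos t)]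
          _ ≤ |α| := by
              nlinarith [hEpos t, hE1, abs_nonneg α, abs_nonneg (Real.sin (k₁ * (xs - x₁))),
                mul_le_mul_of_nonneg_left (Real.abs_sin_le_one (k₁ * (xs - x₁))) (abs_nonneg α)]
        nlinarith [hm, hD]
      rw [hfor, hc₁def, div_mul_eq_mul_div]
      apply div_le_div₀ (by positivity)
      · exact le_refl _
      · nlinarith [hm]
      · exact hDle
    have := le_ciSup hBdd (⟨xs, hxs⟩ : Set.Icc (0:ℝ) l)
    exact ⟨le_trans hlb this, hSub⟩
  -- eventual hypotheses
  have hE0 : Tendsto E atTop (nhds 0) := by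
    rw [hEdef]
    exact Real.tendsto_exp_atBot.comp
      ((tendsto_const_mul_atBot_of_neg (by linarith : -ν * (k₁ ^ 2 - k₀ ^ 2) < 0)).2 tendsto_id)
  have hev : ∀ᶠ t in atTop, 0 < t ∧ E t ≤ 1 ∧ E t ≤ m / (2 * |α|) := by
    filter_upwards [eventually_gt_atTop (0:ℝ),
      hE0.eventually_le_const (by norm_num : (0:ℝ) < 1),
      hE0.eventually_le_const (by positivity : (0:ℝ) < m / (2 * |α|))] with t h1 h2 h3
    exact ⟨h1, h2, h3⟩
  -- squeeze
  have htlo : Tendsto (fun t : ℝ => Real.log c₁ / t + -ν * (k₁ ^ 2 - k₀ ^ 2)) atTop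
      (nhds (-ν * (k₁ ^ 2 - k₀ ^ 2))) := by
    have := (tendsto_id.const_div_atTop (Real.log c₁)).add_const (-ν * (k₁ ^ 2 - k₀ ^ 2))
    simpa using this
  have hthi : Tendsto (fun t : ℝ => Real.log c₂ / t + -ν * (k₁ ^ 2 - k₀ ^ 2)) atTop
      (nhds (-ν * (k₁ ^ 2 - k₀ ^ 2))) := by
    have := (tendsto_id.const_div_atTop (Real.log c₂)).add_const (-ν * (k₁ ^ 2 - k₀ ^ 2))
    simpa using this
  refine tendsto_of_tendsto_of_tendsto_of_le_of_le' htlo hthi ?_ ?_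
  · filter_upwards [hev] with t ht
    obtain ⟨ht0, h1, h2⟩ := ht
    obtain ⟨hlo, _⟩ := main t ht0 h1 h2
    have hlog : Real.log (c₁ * E t) ≤ Real.log (S t) :=
      Real.log_le_log (by positivity) hlo
    rw [Real.log_mul hc₁.ne' (hEpos t).ne', hEdef, Real.log_exp] at hlog
    have heq : (Real.log c₁ + -ν * (k₁ ^ 2 - k₀ ^ 2) * t) / t
        = Real.log c₁ / t + -ν * (k₁ ^ 2 - k₀ ^ 2) := by
      field_simp
    calc Real.log c₁ / t + -ν * (k₁ ^ 2 - k₀ ^ 2)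
        = (Real.log c₁ + -ν * (k₁ ^ 2 - k₀ ^ 2) * t) / t := heq.symm
      _ ≤ Real.log (S t) / t := by
          exact div_le_div_of_nonneg_right hlog ht0.le
  · filter_upwards [hev] with t ht
    obtain ⟨ht0, h1, h2⟩ := ht
    obtain ⟨hlo, hhi⟩ := main t ht0 h1 h2
    have hSpos : 0 < S t := lt_of_lt_of_le (by positivity) hlo
    have hlog : Real.log (S t) ≤ Real.log (c₂ * E t) :=
      Real.log_le_log hSpos hhi
    rw [Real.log_mul hc₂.ne' (hEpos t).ne', hEdef, Real.log_exp] at hlog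
    have heq : (Real.log c₂ + -ν * (k₁ ^ 2 - k₀ ^ 2) * t) / t
        = Real.log c₂ / t + -ν * (k₁ ^ 2 - k₀ ^ 2) := by
      field_simp
    calc Real.log (S t) / t
        ≤ (Real.log c₂ + -ν * (k₁ ^ 2 - k₀ ^ 2) * t) / t := by
          exact div_le_div_of_nonneg_right hlog ht0.le
      _ = Real.log c₂ / t + -ν * (k₁ ^ 2 - k₀ ^ 2) := heq
end
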